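/- arXiv:1811.09853 — 9 statements merged into one kernel-verified Lean document; each statement's English description precedes it below -/
import Mathlib

section
/- Let p be a prime and n a positive integer. There is an absolute constant C > 0 such that for every subset A of F_p^n with |A| = α·p^n for some α > 0, the set 2A − 2A = {a + b − c − d : a, b, c, d ∈ A} contains a linear subspace of F_p^n of codimension at most C·α^{-2}. -/
open Finset Complex

namespace BogolyubovAux

noncomputable def ee (p : ℕ) [NeZero p] : AddChar (ZMod p) ℂ :=
  AddChar.zmodChar p (Complex.isPrimitiveRoot_exp p (NeZero.ne p)).pow_eq_one

lemma ee_prim (p : ℕ) [NeZero p] : (ee p).IsPrimitive :=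
  AddChar.zmodChar_primitive_of_primitive_root p (Complex.isPrimitiveRoot_exp p (NeZero.ne p))

lemma abs_ee (p : ℕ) [NeZero p] (k : ZMod p) : ‖ee p k‖ = 1 := by
  have h : ‖Complex.exp (2 * Real.pi * Complex.I / p)‖ = 1 := by
    rw [Complex.norm_exp]
    have h0 : (2 * (Real.pi : ℂ) * Complex.I / (p : ℂ)).re = 0 := by
      rw [div_eq_mul_inv]
      have : ((p : ℂ))⁻¹ = (((p : ℝ))⁻¹ : ℂ) := by push_cast; ring
      rw [this]
      simp [Complex.mul_re, Complex.mul_im]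
    rw [h0, Real.exp_zero]
  show ‖AddChar.zmodChar p _ k‖ = 1
  rw [AddChar.zmodChar_apply, norm_pow, h, one_pow]

lemma conj_ee (p : ℕ) [NeZero p] (k : ZMod p) :
    (starRingEnd ℂ) (ee p k) = ee p (-k) := by
  have h1 : ee p (-k) * ee p k = 1 := by
    rw [← AddChar.map_add_eq_mul, neg_add_cancel, AddChar.map_zero_eq_one]
  have h2 : (starRingEnd ℂ) (ee p k) * ee p k = 1 := by
    rw [mul_comm, Complex.mul_conj, Complex.normSq_eq_norm_sq, abs_ee]
    norm_num
  have hne : ee p k ≠ 0 := by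
    intro h
    rw [h, mul_zero] at h2
    exact one_ne_zero h2.symm
  exact mul_right_cancel₀ hne (h2.trans h1.symm)

lemma ee_sum (p : ℕ) [NeZero p] {ι : Type*} (s : Finset ι) (f : ι → ZMod p) :
    ee p (∑ i ∈ s, f i) = ∏ i ∈ s, ee p (f i) := by
  classical
  induction s using Finset.cons_induction with
  | empty => simp
  | cons a s ha ih => rw [Finset.sum_cons, Finset.prod_cons, AddChar.map_add_eq_mul, ih]

lemma sum_mul_sum_product {α β : Type*} (s : Finset α) (t : Finset β) (f : α → ℂ) (g : β → ℂ) :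
    (∑ i ∈ s, f i) * (∑ j ∈ t, g j) = ∑ q ∈ s ×ˢ t, f q.1 * g q.2 := by
  rw [Finset.sum_mul_sum, Finset.sum_product]

lemma sum_ee_mul (p : ℕ) [NeZero p] {c : ZMod p} (hc : c ≠ 0) :
    ∑ t : ZMod p, ee p (c * t) = 0 := by
  have h := AddChar.sum_eq_zero_of_ne_one (ee_prim p hc)
  simpa [AddChar.mulShift_apply] using h

end BogolyubovAux

set_option maxHeartbeats 8000000 in
/-- **Bogolyubov's theorem.** There is an absolute constant `C > 0` such that for every
prime `p`, every positive integer `n`, and every subset `A` of `F_p^n` of cardinality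
`α · p^n` with `α > 0`, the set `2A − 2A = {a + b − c − d : a, b, c, d ∈ A}` contains a
linear subspace of codimension at most `C · α⁻²`. -/
theorem bogolyubov :
    ∃ C : ℝ, 0 < C ∧
      ∀ (p n : ℕ), p.Prime → 0 < n →
        ∀ (A : Set (Fin n → ZMod p)) (α : ℝ), 0 < α →
          (A.ncard : ℝ) = α * (p : ℝ) ^ n →
          ∃ W : Submodule (ZMod p) (Fin n → ZMod p),
            (W : Set (Fin n → ZMod p)) ⊆
              {v | ∃ a ∈ A, ∃ b ∈ A, ∃ c ∈ A, ∃ d ∈ A, v = a + b - c - d} ∧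
            (n : ℝ) - (Module.finrank (ZMod p) W : ℝ) ≤ C * α⁻¹ ^ 2 := by
  classical
  refine ⟨2, by norm_num, ?_⟩
  intro p n hp hn A α hα hcard
  haveI : Fact p.Prime := ⟨hp⟩
  haveI : NeZero p := ⟨hp.pos.ne'⟩
  -- the dot product
  set dot : (Fin n → ZMod p) → (Fin n → ZMod p) → ZMod p := fun r x => ∑ i, r i * x i with hdot
  have dot_add : ∀ r u v : (Fin n → ZMod p), dot r (u + v) = dot r u + dot r v := by
    intro r u v; simp [hdot, Pi.add_apply, mul_add, Finset.sum_add_distrib]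
  have dot_sub : ∀ r u v : (Fin n → ZMod p), dot r (u - v) = dot r u - dot r v := by
    intro r u v; simp [hdot, Pi.sub_apply, mul_sub, Finset.sum_sub_distrib]
  have dot_zero : ∀ r : (Fin n → ZMod p), dot r 0 = 0 := by intro r; simp [hdot]
  have dot_zero' : ∀ x : (Fin n → ZMod p), dot 0 x = 0 := by intro x; simp [hdot]
  -- orthogonality
  have orth : ∀ y : (Fin n → ZMod p), ∑ r : (Fin n → ZMod p), BogolyubovAux.ee p (dot r y)
      = if y = 0 then (p : ℂ) ^ n else 0 := by
    intro y
    have expand : ∀ r : Fin n → ZMod p,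
        BogolyubovAux.ee p (dot r y) = ∏ i, BogolyubovAux.ee p (r i * y i) := by
      intro r
      rw [hdot]
      exact BogolyubovAux.ee_sum p Finset.univ _
    have h2 : ∑ r : Fin n → ZMod p, BogolyubovAux.ee p (dot r y)
        = ∏ i, ∑ t : ZMod p, BogolyubovAux.ee p (t * y i) := by
      rw [Finset.sum_congr rfl fun r _ => expand r]
      rw [Finset.prod_univ_sum, Fintype.piFinset_univ]
    rw [h2]
    by_cases hy : y = 0
    · rw [if_pos hy]
      have h3 : ∀ i : Fin n, ∑ t : ZMod p, BogolyubovAux.ee p (t * y i) = (p : ℂ) := by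
        intro i
        rw [hy]
        simp only [Pi.zero_apply, mul_zero, AddChar.map_zero_eq_one]
        rw [Finset.sum_const, Finset.card_univ, ZMod.card, nsmul_eq_mul, mul_one]
      rw [Finset.prod_congr rfl fun i _ => h3 i, Finset.prod_const, Finset.card_univ,
        Fintype.card_fin]
    · rw [if_neg hy]
      obtain ⟨i, hi⟩ : ∃ i, y i ≠ 0 := by
        by_contra h
        push_neg at h
        exact hy (funext h)
      refine Finset.prod_eq_zero (Finset.mem_univ i) ?_
      have h4 := BogolyubovAux.sum_ee_mul p hi
      calc ∑ t : ZMod p, BogolyubovAux.ee p (t * y i)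
          = ∑ t : ZMod p, BogolyubovAux.ee p (y i * t) :=
            Finset.sum_congr rfl fun t _ => by rw [mul_comm]
        _ = 0 := h4
  -- the finite set
  have hAfin : A.Finite := Set.toFinite A
  set A' : Finset (Fin n → ZMod p) := hAfin.toFinset with hA'
  have hmemA : ∀ a : (Fin n → ZMod p), a ∈ A' ↔ a ∈ A := fun a => hAfin.mem_toFinset
  have hKcard : A.ncard = A'.card := by
    exact Set.ncard_eq_toFinset_card A hAfin
  set K : ℝ := (A'.card : ℝ) with hK
  have hKα : K = α * (p : ℝ) ^ n := by rw [hK, ← hcard, hKcard]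
  have hppos : (0 : ℝ) < (p : ℝ) := by exact_mod_cast hp.pos
  have hpn_pos : (0 : ℝ) < (p : ℝ) ^ n := pow_pos hppos n
  have hKpos : (0 : ℝ) < K := by rw [hKα]; exact mul_pos hα hpn_pos
  have hK1 : (1 : ℝ) ≤ K := by
    have : A'.card ≠ 0 := by
      intro h; rw [hK, h] at hKpos; norm_num at hKpos
    have h1 := Nat.one_le_iff_ne_zero.2 this
    rw [hK]; exact_mod_cast h1
  have hcardG : Fintype.card (Fin n → ZMod p) = p ^ n := by
    rw [Fintype.card_fun]; simp [ZMod.card]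
  have hKle : K ≤ (p : ℝ) ^ n := by
    rw [hK]
    calc (A'.card : ℝ) ≤ (Fintype.card (Fin n → ZMod p) : ℝ) := by
          exact_mod_cast Finset.card_le_univ A'
      _ = (p : ℝ) ^ n := by rw [hcardG]; push_cast; ring
  -- Fourier coefficients
  set hatA : (Fin n → ZMod p) → ℂ := fun r => ∑ a ∈ A', BogolyubovAux.ee p (-(dot r a)) with hhat
  set conjA : (Fin n → ZMod p) → ℂ := fun r => ∑ a ∈ A', BogolyubovAux.ee p (dot r a) with hconj
  have hconj_eq : ∀ r, conjA r = (starRingEnd ℂ) (hatA r) := by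
    intro r
    rw [hhat, hconj, map_sum]
    exact Finset.sum_congr rfl fun a _ => by rw [BogolyubovAux.conj_ee, neg_neg]
  set m : (Fin n → ZMod p) → ℝ := fun r => Complex.normSq (hatA r) with hm
  have hmul_conj : ∀ r, hatA r * conjA r = ((m r : ℝ) : ℂ) := by
    intro r; rw [hconj_eq, Complex.mul_conj, hm]
  have hm_nonneg : ∀ r, 0 ≤ m r := fun r => Complex.normSq_nonneg _
  -- Parseval
  have hC : ∑ r : (Fin n → ZMod p), hatA r * conjA r = (p : ℂ) ^ n * (A'.card : ℂ) := by
    have hterm : ∀ r : Fin n → ZMod p, hatA r * conjA r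
        = ∑ q ∈ A' ×ˢ A', BogolyubovAux.ee p (dot r (q.1 - q.2)) := by
      intro r
      simp only [hhat, hconj, Finset.sum_mul, Finset.mul_sum, Finset.sum_product]
      refine Finset.sum_congr rfl fun a _ => Finset.sum_congr rfl fun b _ => ?_
      rw [← AddChar.map_add_eq_mul, dot_sub]
      congr 1
      ring
    calc ∑ r : (Fin n → ZMod p), hatA r * conjA r
        = ∑ r : (Fin n → ZMod p), ∑ q ∈ A' ×ˢ A', BogolyubovAux.ee p (dot r (q.1 - q.2)) :=
          Finset.sum_congr rfl fun r _ => hterm r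
      _ = ∑ q ∈ A' ×ˢ A', ∑ r : (Fin n → ZMod p), BogolyubovAux.ee p (dot r (q.1 - q.2)) :=
          Finset.sum_comm
      _ = ∑ q ∈ A' ×ˢ A', if q.1 - q.2 = 0 then (p : ℂ) ^ n else 0 :=
          Finset.sum_congr rfl fun q _ => orth _
      _ = ∑ a ∈ A', ∑ b ∈ A', if a - b = 0 then (p : ℂ) ^ n else 0 := by
          rw [Finset.sum_product]
      _ = ∑ _a ∈ A', (p : ℂ) ^ n := by
          refine Finset.sum_congr rfl fun a ha => ?_
          simp only [sub_eq_zero]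
          rw [Finset.sum_ite_eq A' a (fun _ => (p : ℂ) ^ n), if_pos ha]
      _ = (p : ℂ) ^ n * (A'.card : ℂ) := by
          rw [Finset.sum_const, nsmul_eq_mul, mul_comm]
  have parseval : ∑ r : (Fin n → ZMod p), m r = (p : ℝ) ^ n * K := by
    apply Complex.ofReal_injective
    push_cast [hK]
    rw [← hC]
    exact Finset.sum_congr rfl fun r _ => (hmul_conj r).symm
  have hm0 : m 0 = K ^ 2 := by
    have h0 : hatA 0 = (A'.card : ℂ) := by
      simp only [hhat]
      have h1 : ∀ a ∈ A', BogolyubovAux.ee p (-(dot 0 a)) = 1 := fun a _ => by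
        rw [dot_zero', neg_zero, AddChar.map_zero_eq_one]
      rw [Finset.sum_congr rfl h1, Finset.sum_const, nsmul_eq_mul, mul_one]
    simp only [hm]
    rw [h0, Complex.normSq_natCast, hK]
    push_cast
    ring
  -- threshold and spectrum
  set T : ℝ := K ^ 3 / (2 * (p : ℝ) ^ n) with hT
  have hTpos : 0 < T := by positivity
  set Spec : Finset (Fin n → ZMod p) := Finset.univ.filter (fun r => T ≤ m r) with hSpec
  have hzero_mem : (0 : (Fin n → ZMod p)) ∈ Spec := by
    rw [hSpec, Finset.mem_filter]
    refine ⟨Finset.mem_univ _, ?_⟩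
    rw [hm0, hT]
    rw [div_le_iff₀ (by positivity)]
    nlinarith
  have hSpec_card : (Spec.card : ℝ) ≤ 2 * (α⁻¹) ^ 2 := by
    have h1 : (Spec.card : ℝ) * T ≤ ∑ r : (Fin n → ZMod p), m r := by
      calc (Spec.card : ℝ) * T = ∑ _r ∈ Spec, T := by rw [Finset.sum_const, nsmul_eq_mul]
        _ ≤ ∑ r ∈ Spec, m r := Finset.sum_le_sum fun r hr => (Finset.mem_filter.1 hr).2
        _ ≤ ∑ r : (Fin n → ZMod p), m r := Finset.sum_le_sum_of_subset_of_nonneg (Finset.subset_univ _)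
            fun r _ _ => hm_nonneg r
    rw [parseval] at h1
    have hαinv : α⁻¹ = (p : ℝ) ^ n / K := by
      rw [hKα]; field_simp
    rw [hαinv]
    rw [hT] at h1
    have h2 : (Spec.card : ℝ) * K ^ 3 ≤ (p:ℝ)^n * K * (2 * (p:ℝ)^n) := by
      calc (Spec.card : ℝ) * K ^ 3 = (Spec.card : ℝ) * (K^3 / (2*(p:ℝ)^n)) * (2*(p:ℝ)^n) := by
            field_simp
        _ ≤ (p:ℝ)^n * K * (2 * (p:ℝ)^n) := by
            apply mul_le_mul_of_nonneg_right h1 (by positivity)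
    have heq : 2 * ((p:ℝ)^n / K) ^ 2 = 2 * ((p:ℝ)^n)^2 / K^2 := by
      rw [div_pow, mul_div_assoc]
    rw [heq, le_div_iff₀ (by positivity)]
    have h3 : ((Spec.card : ℝ) * K ^ 2) * K ≤ (2 * ((p:ℝ)^n)^2) * K := by nlinarith
    exact le_of_mul_le_mul_right h3 hKpos
  -- the subspace
  set Φ : (Fin n → ZMod p) →ₗ[ZMod p] (↥Spec → ZMod p) :=
    { toFun := fun x r => dot (r : (Fin n → ZMod p)) x
      map_add' := by intro x y; funext r; exact dot_add _ _ _
      map_smul' := by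
        intro c x; funext r
        simp only [RingHom.id_apply, Pi.smul_apply, smul_eq_mul, hdot]
        rw [Finset.mul_sum]
        exact Finset.sum_congr rfl fun i _ => by ring } with hΦ
  refine ⟨LinearMap.ker Φ, ?_, ?_⟩
  · -- containment
    intro x hx
    have hxk : ∀ r ∈ Spec, dot r x = 0 := by
      intro r hr
      have hx' : Φ x = 0 := LinearMap.mem_ker.1 hx
      have h1 := congrFun hx' ⟨r, hr⟩
      simpa [hΦ] using h1
    set P4 : Finset ((Fin n → ZMod p) × (Fin n → ZMod p) × (Fin n → ZMod p) × (Fin n → ZMod p)) :=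
      A' ×ˢ A' ×ˢ A' ×ˢ A' with hP4
    set QF := P4.filter
      (fun q => x + q.2.2.1 + q.2.2.2 - q.1 - q.2.1 = 0) with hQF
    -- the counting identity
    have hfac : ∀ r : Fin n → ZMod p, ((m r : ℝ) : ℂ) ^ 2 * BogolyubovAux.ee p (dot r x)
        = ∑ q ∈ P4, BogolyubovAux.ee p (dot r (x + q.2.2.1 + q.2.2.2 - q.1 - q.2.1)) := by
      intro r
      have h1 : ((m r : ℝ) : ℂ) ^ 2 * BogolyubovAux.ee p (dot r x)
          = (hatA r * (hatA r * (conjA r * conjA r))) * BogolyubovAux.ee p (dot r x) := by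
        have h2 := hmul_conj r
        have h3 : hatA r * (hatA r * (conjA r * conjA r))
            = (hatA r * conjA r) * (hatA r * conjA r) := by ring
        rw [h3, h2]
        ring
      rw [h1]
      simp only [hhat, hconj]
      rw [BogolyubovAux.sum_mul_sum_product, BogolyubovAux.sum_mul_sum_product,
        BogolyubovAux.sum_mul_sum_product, Finset.sum_mul]
      rw [hP4]
      refine Finset.sum_congr rfl fun q hq => ?_
      simp only [← AddChar.map_add_eq_mul]
      rw [dot_sub, dot_sub, dot_add, dot_add]
      congr 1
      ring
    have key : ∑ r : Fin n → ZMod p, ((m r : ℝ) : ℂ) ^ 2 * BogolyubovAux.ee p (dot r x)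
        = (p : ℂ) ^ n * (QF.card : ℂ) := by
      calc ∑ r : Fin n → ZMod p, ((m r : ℝ) : ℂ) ^ 2 * BogolyubovAux.ee p (dot r x)
          = ∑ r : Fin n → ZMod p, ∑ q ∈ P4,
              BogolyubovAux.ee p (dot r (x + q.2.2.1 + q.2.2.2 - q.1 - q.2.1)) :=
            Finset.sum_congr rfl fun r _ => hfac r
        _ = ∑ q ∈ P4, ∑ r : Fin n → ZMod p,
              BogolyubovAux.ee p (dot r (x + q.2.2.1 + q.2.2.2 - q.1 - q.2.1)) :=
            Finset.sum_comm
        _ = ∑ q ∈ P4, if x + q.2.2.1 + q.2.2.2 - q.1 - q.2.1 = 0 then (p : ℂ) ^ n else 0 :=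
            Finset.sum_congr rfl fun q _ => orth _
        _ = ∑ _q ∈ QF, (p : ℂ) ^ n := by
            rw [hQF, Finset.sum_filter]
        _ = (p : ℂ) ^ n * (QF.card : ℂ) := by
            rw [Finset.sum_const, nsmul_eq_mul, mul_comm]
    -- real parts
    have hre : ∑ r : Fin n → ZMod p, (m r) ^ 2 * (BogolyubovAux.ee p (dot r x)).re
        = (p : ℝ) ^ n * (QF.card : ℝ) := by
      have h1 := congrArg Complex.re key
      have h2 : (∑ r : Fin n → ZMod p, ((m r : ℝ) : ℂ) ^ 2 * BogolyubovAux.ee p (dot r x)).re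
          = ∑ r : Fin n → ZMod p, (m r) ^ 2 * (BogolyubovAux.ee p (dot r x)).re := by
        rw [Complex.re_sum]
        refine Finset.sum_congr rfl fun r _ => ?_
        rw [← Complex.ofReal_pow, Complex.re_ofReal_mul]
      have h3 : ((p : ℂ) ^ n * (QF.card : ℂ)).re = (p : ℝ) ^ n * (QF.card : ℝ) := by
        have h4 : (p : ℂ) ^ n * (QF.card : ℂ) = (((p : ℝ) ^ n * (QF.card : ℝ) : ℝ) : ℂ) := by
          push_cast
          ring
        rw [h4, Complex.ofReal_re]
      rw [h2, h3] at h1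
      exact h1
    -- lower bound on real part
    have hub : ∀ r : Fin n → ZMod p, -1 ≤ (BogolyubovAux.ee p (dot r x)).re := by
      intro r
      have h := Complex.abs_re_le_norm (BogolyubovAux.ee p (dot r x))
      rw [BogolyubovAux.abs_ee] at h
      exact (abs_le.1 h).1
    have hsplit := Finset.sum_filter_add_sum_filter_not Finset.univ (fun r => T ≤ m r)
        (fun r => (m r) ^ 2 * (BogolyubovAux.ee p (dot r x)).re)
    rw [← hSpec] at hsplit
    have hS1 : K ^ 4 ≤ ∑ r ∈ Spec, (m r) ^ 2 * (BogolyubovAux.ee p (dot r x)).re := by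
      have heach : ∀ r ∈ Spec, (m r) ^ 2 * (BogolyubovAux.ee p (dot r x)).re = (m r) ^ 2 := by
        intro r hr
        rw [hxk r hr, AddChar.map_zero_eq_one, Complex.one_re, mul_one]
      rw [Finset.sum_congr rfl heach]
      have h0 : K ^ 4 = (m 0) ^ 2 := by rw [hm0]; ring
      rw [h0]
      exact Finset.single_le_sum (fun r _ => sq_nonneg (m r)) hzero_mem
    have hS2 : -(K ^ 4 / 2) ≤ ∑ r ∈ Finset.univ.filter (fun r => ¬ T ≤ m r),
        (m r) ^ 2 * (BogolyubovAux.ee p (dot r x)).re := by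
      have heach : ∀ r ∈ Finset.univ.filter (fun r => ¬ T ≤ m r),
          -(T * m r) ≤ (m r) ^ 2 * (BogolyubovAux.ee p (dot r x)).re := by
        intro r hr
        have hmr : m r < T := lt_of_not_ge (Finset.mem_filter.1 hr).2
        have h1 : -((m r) ^ 2) ≤ (m r) ^ 2 * (BogolyubovAux.ee p (dot r x)).re := by
          nlinarith [hub r, sq_nonneg (m r)]
        have h2 : (m r) ^ 2 ≤ T * m r := by nlinarith [hm_nonneg r]
        linarith
      have hsum_le : ∑ r ∈ Finset.univ.filter (fun r => ¬ T ≤ m r), m r ≤ (p : ℝ) ^ n * K := by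
        rw [← parseval]
        exact Finset.sum_le_sum_of_subset_of_nonneg (Finset.filter_subset _ _)
          fun r _ _ => hm_nonneg r
      calc -(K ^ 4 / 2) = -(T * ((p : ℝ) ^ n * K)) := by
            rw [hT]
            field_simp
        _ ≤ -(T * ∑ r ∈ Finset.univ.filter (fun r => ¬ T ≤ m r), m r) := by
            have := mul_le_mul_of_nonneg_left hsum_le hTpos.le
            linarith
        _ = ∑ r ∈ Finset.univ.filter (fun r => ¬ T ≤ m r), -(T * m r) := by
            rw [Finset.mul_sum, Finset.sum_neg_distrib]
        _ ≤ _ := Finset.sum_le_sum heach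
    have hpos : 0 < (p : ℝ) ^ n * (QF.card : ℝ) := by
      have h5 : 0 < K ^ 4 / 2 := div_pos (pow_pos hKpos 4) two_pos
      rw [← hre, ← hsplit]
      linarith
    have hQFne : QF.Nonempty := by
      rw [← Finset.card_pos]
      by_contra h
      push_neg at h
      have h0 : QF.card = 0 := Nat.le_zero.1 h
      rw [h0] at hpos
      norm_num at hpos
    obtain ⟨q, hq⟩ := hQFne
    rw [hQF, Finset.mem_filter] at hq
    obtain ⟨hmem, heq⟩ := hq
    rw [hP4, Finset.mem_product] at hmem
    obtain ⟨ha, hbc⟩ := hmem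
    rw [Finset.mem_product] at hbc
    obtain ⟨hb, hcd⟩ := hbc
    rw [Finset.mem_product] at hcd
    obtain ⟨hc, hd⟩ := hcd
    refine ⟨q.1, (hmemA _).1 ha, q.2.1, (hmemA _).1 hb, q.2.2.1, (hmemA _).1 hc,
      q.2.2.2, (hmemA _).1 hd, ?_⟩
    rw [← sub_eq_zero]
    have h2 : x - (q.1 + q.2.1 - q.2.2.1 - q.2.2.2)
        = x + q.2.2.1 + q.2.2.2 - q.1 - q.2.1 := by abel
    rw [h2]
    exact heq
  · -- codimension bound
    have hrank := LinearMap.finrank_range_add_finrank_ker Φ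
    have hdom : Module.finrank (ZMod p) (Fin n → ZMod p) = n := by
      simp [Module.finrank_pi]
    have hcod : Module.finrank (ZMod p) (↥Spec → ZMod p) = Spec.card := by
      simp [Module.finrank_pi]
    have hle : Module.finrank (ZMod p) (LinearMap.range Φ) ≤ Spec.card := by
      rw [← hcod]; exact (LinearMap.range Φ).finrank_le
    rw [hdom] at hrank
    have : (n : ℝ) - (Module.finrank (ZMod p) (LinearMap.ker Φ) : ℝ)
        = (Module.finrank (ZMod p) (LinearMap.range Φ) : ℝ) := by
      have := hrank
      push_cast [← this]
      ring
    rw [this]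
    calc (Module.finrank (ZMod p) (LinearMap.range Φ) : ℝ) ≤ (Spec.card : ℝ) := by
          exact_mod_cast hle
      _ ≤ 2 * α⁻¹ ^ 2 := hSpec_card
end

section
/- Let P ⊆ F_3^2 × F_3^2 be the set of pairs ((x_1,x_2),(y_1,y_2)) satisfying x_1·y_1^2 + x_2·y_2^2 = 0 and x_1^2·y_1 + x_2^2·y_2 = 0 in F_3. Then P is transverse but P is not a bilinear set. -/
/-- The vertical sum `A +V A`. -/
def vSum {V1 V2 : Type*} [Add V2] (A : Set (V1 × V2)) : Set (V1 × V2) :=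
  {q | ∃ y₁ y₂, (q.1, y₁) ∈ A ∧ (q.1, y₂) ∈ A ∧ q.2 = y₁ + y₂}

/-- The horizontal sum `A +H A`. -/
def hSum {V1 V2 : Type*} [Add V1] (A : Set (V1 × V2)) : Set (V1 × V2) :=
  {q | ∃ x₁ x₂, (x₁, q.2) ∈ A ∧ (x₂, q.2) ∈ A ∧ q.1 = x₁ + x₂}

/-- A set is transverse when it is stable under vertical and horizontal sums. -/
def IsTransverse {V1 V2 : Type*} [Add V1] [Add V2] (A : Set (V1 × V2)) : Prop :=
  vSum A = A ∧ hSum A = A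

/-- A subset of `F_p^n × F_p^n` is bilinear when it is the common zero set, on a product of
subspaces `W₁ × W₂`, of finitely many bilinear forms. -/
def IsBilinearSet (p n : ℕ) (P : Set ((Fin n → ZMod p) × (Fin n → ZMod p))) : Prop :=
  ∃ (W₁ W₂ : Submodule (ZMod p) (Fin n → ZMod p)) (r : ℕ)
    (Q : Fin r → ((Fin n → ZMod p) →ₗ[ZMod p] (Fin n → ZMod p) →ₗ[ZMod p] ZMod p)),
    P = {q | q.1 ∈ W₁ ∧ q.2 ∈ W₂ ∧ ∀ i, Q i q.1 q.2 = 0}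

/-- Vertical-sum stability, as a decidable statement. -/
lemma aux_v : ∀ x y : Fin 2 → ZMod 3,
    (∃ a b : Fin 2 → ZMod 3,
      (x 0 * (a 0) ^ 2 + x 1 * (a 1) ^ 2 = 0 ∧ (x 0) ^ 2 * a 0 + (x 1) ^ 2 * a 1 = 0) ∧
      (x 0 * (b 0) ^ 2 + x 1 * (b 1) ^ 2 = 0 ∧ (x 0) ^ 2 * b 0 + (x 1) ^ 2 * b 1 = 0) ∧
      y = a + b) ↔
    (x 0 * (y 0) ^ 2 + x 1 * (y 1) ^ 2 = 0 ∧ (x 0) ^ 2 * y 0 + (x 1) ^ 2 * y 1 = 0) := by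
  decide

/-- Horizontal-sum stability, as a decidable statement. -/
lemma aux_h : ∀ x y : Fin 2 → ZMod 3,
    (∃ a b : Fin 2 → ZMod 3,
      (a 0 * (y 0) ^ 2 + a 1 * (y 1) ^ 2 = 0 ∧ (a 0) ^ 2 * y 0 + (a 1) ^ 2 * y 1 = 0) ∧
      (b 0 * (y 0) ^ 2 + b 1 * (y 1) ^ 2 = 0 ∧ (b 0) ^ 2 * y 0 + (b 1) ^ 2 * y 1 = 0) ∧
      x = a + b) ↔
    (x 0 * (y 0) ^ 2 + x 1 * (y 1) ^ 2 = 0 ∧ (x 0) ^ 2 * y 0 + (x 1) ^ 2 * y 1 = 0) := by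
  decide

/-- The bilinear-form identity coming from the tensor relation
`(1,1)⊗(1,1) = 2·(0,1)⊗(1,0) + 2·(1,0)⊗(0,1) + (1,2)⊗(1,2)`. -/
lemma aux_tensor (Q : (Fin 2 → ZMod 3) →ₗ[ZMod 3] (Fin 2 → ZMod 3) →ₗ[ZMod 3] ZMod 3) :
    Q ![1, 1] ![1, 1] =
      2 * Q ![0, 1] ![1, 0] + 2 * Q ![1, 0] ![0, 1] + Q ![1, 2] ![1, 2] := by
  have e1 : (![1, 1] : Fin 2 → ZMod 3) = ![1, 0] + ![0, 1] := by decide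
  have e2 : (![1, 2] : Fin 2 → ZMod 3) = ![1, 0] + (2 : ZMod 3) • ![0, 1] := by decide
  rw [e1, e2]
  simp only [map_add, map_smul, LinearMap.add_apply, LinearMap.smul_apply, smul_eq_mul]
  ring_nf
  have h4 : (4 : ZMod 3) = 1 := by decide
  rw [h4]
  ring

set_option maxHeartbeats 1600000 in
/-- The set `P ⊆ F_3^2 × F_3^2` of pairs `((x₁,x₂),(y₁,y₂))` with
`x₁y₁² + x₂y₂² = 0` and `x₁²y₁ + x₂²y₂ = 0` is transverse but not bilinear. -/
theorem transverse_not_bilinear_example :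
    IsTransverse {q : (Fin 2 → ZMod 3) × (Fin 2 → ZMod 3) |
        q.1 0 * (q.2 0) ^ 2 + q.1 1 * (q.2 1) ^ 2 = 0 ∧
        (q.1 0) ^ 2 * q.2 0 + (q.1 1) ^ 2 * q.2 1 = 0} ∧
    ¬ IsBilinearSet 3 2 {q : (Fin 2 → ZMod 3) × (Fin 2 → ZMod 3) |
        q.1 0 * (q.2 0) ^ 2 + q.1 1 * (q.2 1) ^ 2 = 0 ∧
        (q.1 0) ^ 2 * q.2 0 + (q.1 1) ^ 2 * q.2 1 = 0} := by
  constructor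
  · constructor
    · ext ⟨x, y⟩
      simpa [vSum, Set.mem_setOf_eq] using aux_v x y
    · ext ⟨x, y⟩
      simpa [hSum, Set.mem_setOf_eq] using aux_h x y
  · rintro ⟨W₁, W₂, r, Q, hP⟩
    -- the three points of `P` witnessing the tensor relation
    have h1 : ((![0, 1], ![1, 0]) : (Fin 2 → ZMod 3) × (Fin 2 → ZMod 3)) ∈
        {q : (Fin 2 → ZMod 3) × (Fin 2 → ZMod 3) |
          q.1 0 * (q.2 0) ^ 2 + q.1 1 * (q.2 1) ^ 2 = 0 ∧
          (q.1 0) ^ 2 * q.2 0 + (q.1 1) ^ 2 * q.2 1 = 0} := by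
      exact ⟨by decide, by decide⟩
    have h2 : ((![1, 0], ![0, 1]) : (Fin 2 → ZMod 3) × (Fin 2 → ZMod 3)) ∈
        {q : (Fin 2 → ZMod 3) × (Fin 2 → ZMod 3) |
          q.1 0 * (q.2 0) ^ 2 + q.1 1 * (q.2 1) ^ 2 = 0 ∧
          (q.1 0) ^ 2 * q.2 0 + (q.1 1) ^ 2 * q.2 1 = 0} := by
      exact ⟨by decide, by decide⟩
    have h3 : ((![1, 2], ![1, 2]) : (Fin 2 → ZMod 3) × (Fin 2 → ZMod 3)) ∈
        {q : (Fin 2 → ZMod 3) × (Fin 2 → ZMod 3) |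
          q.1 0 * (q.2 0) ^ 2 + q.1 1 * (q.2 1) ^ 2 = 0 ∧
          (q.1 0) ^ 2 * q.2 0 + (q.1 1) ^ 2 * q.2 1 = 0} := by
      exact ⟨by decide, by decide⟩
    -- points giving membership of `(1,1)` in `W₁` and `W₂`
    have h4 : ((![1, 1], ![0, 0]) : (Fin 2 → ZMod 3) × (Fin 2 → ZMod 3)) ∈
        {q : (Fin 2 → ZMod 3) × (Fin 2 → ZMod 3) |
          q.1 0 * (q.2 0) ^ 2 + q.1 1 * (q.2 1) ^ 2 = 0 ∧
          (q.1 0) ^ 2 * q.2 0 + (q.1 1) ^ 2 * q.2 1 = 0} := by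
      exact ⟨by decide, by decide⟩
    have h5 : ((![0, 0], ![1, 1]) : (Fin 2 → ZMod 3) × (Fin 2 → ZMod 3)) ∈
        {q : (Fin 2 → ZMod 3) × (Fin 2 → ZMod 3) |
          q.1 0 * (q.2 0) ^ 2 + q.1 1 * (q.2 1) ^ 2 = 0 ∧
          (q.1 0) ^ 2 * q.2 0 + (q.1 1) ^ 2 * q.2 1 = 0} := by
      exact ⟨by decide, by decide⟩
    rw [hP] at h1 h2 h3 h4 h5
    -- the bad point `z = ((1,1),(1,1))` is not in `P` ...
    have hz : ((![1, 1], ![1, 1]) : (Fin 2 → ZMod 3) × (Fin 2 → ZMod 3)) ∉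
        {q : (Fin 2 → ZMod 3) × (Fin 2 → ZMod 3) |
          q.1 0 * (q.2 0) ^ 2 + q.1 1 * (q.2 1) ^ 2 = 0 ∧
          (q.1 0) ^ 2 * q.2 0 + (q.1 1) ^ 2 * q.2 1 = 0} := by
      intro h
      have := h.1
      simp only [Matrix.cons_val_zero, Matrix.cons_val_one, Matrix.head_cons] at this
      exact absurd this (by decide)
    -- ... but it satisfies all the bilinear constraints
    apply hz
    rw [hP]
    refine ⟨h4.1, h5.2.1, fun i => ?_⟩
    have := aux_tensor (Q i)
    rw [h1.2.2 i, h2.2.2 i, h3.2.2 i] at this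
    simpa using this
end

section
/- For every prime p ≥ 5 and every integer n ≥ 2, there exists a transverse set P ⊆ F_p^n × F_p^n that is not a bilinear set and such that for every x ∈ F_p^n the vertical fiber P_{x·} contains a hyperplane of F_p^n. -/
/-- Second coordinate of the nonlinear involution `ν` of `F_p²` used in the construction.
`ν(a,b) = (a, nuB p a b)` swaps the projective points `[1:1]` and `[1:2]` and fixes all others. -/
def nuB (p : ℕ) (a b : ZMod p) : ZMod p :=
  if a ≠ 0 ∧ b = a then 2*a else if a ≠ 0 ∧ b = 2*a then a else b

lemma nuB_zero (p : ℕ) (b : ZMod p) : nuB p 0 b = b := by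
  simp [nuB]

lemma nuB_invol (p : ℕ) (a b : ZMod p) : nuB p a (nuB p a b) = b := by
  by_cases ha : a = 0
  · simp [nuB, ha]
  · by_cases h1 : b = a
    · have e1 : nuB p a b = 2*a := by simp [nuB, ha, h1]
      rw [e1]
      have h2 : ¬ ((2:ZMod p)*a = a) := by
        intro h; exact ha (by linear_combination h)
      simp [nuB, ha, h2, h1]
    · by_cases h2 : b = 2*a
      · have e1 : nuB p a b = a := by simp [nuB, ha, h1, h2]
        rw [e1]
        simp [nuB, ha, h2]
      · have e1 : nuB p a b = b := by simp [nuB, ha, h1, h2]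
        rw [e1]
        simp [nuB, ha, h1, h2]

lemma nuB_smul (p : ℕ) (hp : p.Prime) (l a b : ZMod p) :
    nuB p (l*a) (l*b) = l * nuB p a b := by
  haveI : Fact p.Prime := ⟨hp⟩
  by_cases hl : l = 0
  · simp [nuB, hl]
  · by_cases ha : a = 0
    · simp [nuB, ha, hl]
    · have hla : l*a ≠ 0 := mul_ne_zero hl ha
      by_cases hb : b = a
      · rw [hb]
        have e1 : nuB p a a = 2*a := by simp [nuB, ha]
        rw [e1]
        have e2 : nuB p (l*a) (l*a) = 2*(l*a) := by simp [nuB, hla]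
        rw [e2]; ring
      · by_cases hb2 : b = 2*a
        · subst hb2
          have : nuB p a (2*a) = a := by
            have h2 : ¬ ((2:ZMod p)*a = a) := fun h => ha (by linear_combination h)
            simp [nuB, ha, h2]
          rw [this]
          have h2' : ¬ (l*(2*a) = l*a) := by
            intro h
            exact ha (by have := mul_left_cancel₀ hl h; linear_combination this)
          have h3' : l*(2*a) = 2*(l*a) := by ring
          have : nuB p (l*a) (l*(2*a)) = l*a := by simp [nuB, hla, h2', h3']
          rw [this]
        · have e1 : nuB p a b = b := by simp [nuB, ha, hb, hb2]
          rw [e1]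
          have h2' : ¬ (l*b = l*a) := fun h => hb (mul_left_cancel₀ hl h)
          have h3' : ¬ (l*b = 2*(l*a)) := by
            intro h
            exact hb2 (by have := mul_left_cancel₀ hl (show l*b = l*(2*a) by linear_combination h); exact this)
          simp [nuB, hla, h2', h3']

lemma exists_t (p : ℕ) (hp : p.Prime) {a w c d : ZMod p} (h : a*d - w*c = 0)
    (hcd : ¬(c = 0 ∧ d = 0)) : ∃ t, a = t*c ∧ w = t*d := by
  haveI : Fact p.Prime := ⟨hp⟩
  by_cases hc : c = 0
  · have hd : d ≠ 0 := fun hd => hcd ⟨hc, hd⟩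
    have ha : a = 0 := by
      have : a * d = 0 := by rw [hc] at h; linear_combination h
      rcases mul_eq_zero.mp this with h' | h'
      · exact h'
      · exact absurd h' hd
    exact ⟨w * d⁻¹, by simp [ha, hc], by field_simp⟩
  · refine ⟨a * c⁻¹, by field_simp, ?_⟩
    have h' : w * c = a * d := by linear_combination -h
    calc w = w * (c * c⁻¹) := by rw [mul_inv_cancel₀ hc, mul_one]
      _ = (w*c)*c⁻¹ := by ring
      _ = (a*d)*c⁻¹ := by rw [h']
      _ = a*c⁻¹*d := by ring

lemma keyA (p : ℕ) (hp : p.Prime) (a1 b1 a2 b2 c d : ZMod p)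
    (h1 : a1*d - nuB p a1 b1 * c = 0) (h2 : a2*d - nuB p a2 b2 * c = 0) :
    (a1+a2)*d - nuB p (a1+a2) (b1+b2) * c = 0 := by
  by_cases hcd : c = 0 ∧ d = 0
  · obtain ⟨rfl, rfl⟩ := hcd; ring
  · obtain ⟨t, ht1, ht2⟩ := exists_t p hp h1 hcd
    obtain ⟨s, hs1, hs2⟩ := exists_t p hp h2 hcd
    have hb1 : b1 = t * nuB p c d := by
      have h := nuB_invol p a1 b1
      rw [ht2, ht1] at h
      rw [nuB_smul p hp] at h
      exact h.symm
    have hb2 : b2 = s * nuB p c d := by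
      have h := nuB_invol p a2 b2
      rw [hs2, hs1] at h
      rw [nuB_smul p hp] at h
      exact h.symm
    have e1 : a1 + a2 = (t+s)*c := by rw [ht1, hs1]; ring
    have e2 : b1 + b2 = (t+s)*nuB p c d := by rw [hb1, hb2]; ring
    rw [e1, e2, nuB_smul p hp, nuB_invol p]
    ring

lemma zmod_facts (p : ℕ) (hp : p.Prime) (hp5 : 5 ≤ p) :
    (1:ZMod p) ≠ 0 ∧ (2:ZMod p) ≠ 0 ∧ (3:ZMod p) ≠ 0 ∧ (2:ZMod p) ≠ 1 := by
  haveI : Fact p.Prime := ⟨hp⟩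
  have key : ∀ k : ℕ, 0 < k → k < 5 → (k : ZMod p) ≠ 0 := by
    intro k hk1 hk2 h
    rw [ZMod.natCast_eq_zero_iff] at h
    have := Nat.le_of_dvd hk1 h
    omega
  refine ⟨by simpa using key 1 one_pos (by norm_num),
    by simpa using key 2 (by norm_num) (by norm_num),
    by simpa using key 3 (by norm_num) (by norm_num), ?_⟩
  intro h
  have h1 : (1:ZMod p) = 0 := by linear_combination h
  exact key 1 one_pos (by norm_num) (by simpa using h1)

lemma ker_hyperplane (p n : ℕ) (hp : p.Prime)
    (f : (Fin n → ZMod p) →ₗ[ZMod p] ZMod p) (hf : ∃ y, f y ≠ 0) :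
    Module.finrank (ZMod p) (LinearMap.ker f) + 1 = n := by
  haveI : Fact p.Prime := ⟨hp⟩
  obtain ⟨y, hy⟩ := hf
  have hr : LinearMap.range f = ⊤ := by
    rw [LinearMap.range_eq_top]
    intro z
    exact ⟨(z * (f y)⁻¹) • y, by rw [map_smul, smul_eq_mul]; field_simp⟩
  have h2 := f.finrank_range_add_finrank_ker
  rw [hr] at h2
  rw [finrank_top, Module.finrank_self] at h2
  have h3 : Module.finrank (ZMod p) (Fin n → ZMod p) = n := by
    simp [Module.finrank_pi]
  omega

lemma nuB_evals (p : ℕ) (hp : p.Prime) (hp5 : 5 ≤ p) :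
    nuB p 1 0 = 0 ∧ nuB p 1 1 = 2 ∧ nuB p 1 2 = 1 := by
  obtain ⟨h1, h2, h3, h21⟩ := zmod_facts p hp hp5
  refine ⟨?_, ?_, ?_⟩
  · have c1 : ¬((0:ZMod p) = 1) := fun h => h1 h.symm
    have c2 : ¬((0:ZMod p) = 2*1) := fun h => h2 (by linear_combination -h)
    rw [nuB, if_neg (by tauto), if_neg (by tauto)]
  · rw [nuB, if_pos ⟨h1, rfl⟩, mul_one]
  · have c1 : ¬((2:ZMod p) = 1) := h21
    have c2 : (2:ZMod p) = 2*1 := by ring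
    rw [nuB, if_neg (by tauto), if_pos ⟨h1, c2⟩]

/-- For every prime `p ≥ 5` and every `n ≥ 2` there is a transverse, non-bilinear set
`P ⊆ F_p^n × F_p^n` all of whose vertical fibers contain a hyperplane. -/
theorem exists_transverse_not_bilinear_hyperplane_fibers (p n : ℕ) (hp : p.Prime)
    (hp5 : 5 ≤ p) (hn : 2 ≤ n) :
    ∃ P : Set ((Fin n → ZMod p) × (Fin n → ZMod p)),
      IsTransverse P ∧ ¬ IsBilinearSet p n P ∧
      ∀ x : Fin n → ZMod p, ∃ H : Submodule (ZMod p) (Fin n → ZMod p),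
        Module.finrank (ZMod p) H + 1 = n ∧ (H : Set (Fin n → ZMod p)) ⊆ {y | (x, y) ∈ P} := by
  haveI : Fact p.Prime := ⟨hp⟩
  haveI : NeZero n := ⟨by omega⟩
  obtain ⟨h1ne, h2ne, h3ne, h21ne⟩ := zmod_facts p hp hp5
  obtain ⟨ev10, ev11, ev12⟩ := nuB_evals p hp hp5
  have h01 : (0 : Fin n) ≠ 1 := by
    intro h
    have hv := congrArg Fin.val h
    rw [Fin.val_zero, Fin.val_one'] at hv
    rw [Nat.mod_eq_of_lt (by omega)] at hv
    omega
  refine ⟨{q : (Fin n → ZMod p) × (Fin n → ZMod p) |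
      q.1 0 * q.2 1 - nuB p (q.1 0) (q.1 1) * q.2 0 = 0}, ⟨?_, ?_⟩, ?_, ?_⟩
  · -- vSum
    ext ⟨x, y⟩
    simp only [vSum, Set.mem_setOf_eq]
    constructor
    · rintro ⟨y1, y2, hy1, hy2, hy⟩
      rw [hy, Pi.add_apply, Pi.add_apply]
      linear_combination hy1 + hy2
    · intro h
      exact ⟨y, 0, h, by simp, by simp⟩
  · -- hSum
    ext ⟨x, y⟩
    simp only [hSum, Set.mem_setOf_eq]
    constructor
    · rintro ⟨x1, x2, hx1, hx2, hx⟩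
      rw [hx, Pi.add_apply, Pi.add_apply]
      exact keyA p hp _ _ _ _ _ _ hx1 hx2
    · intro h
      refine ⟨x, 0, h, ?_, by simp⟩
      simp [nuB_zero]
  · -- not bilinear
    rintro ⟨W1, W2, r, Q, hQ⟩
    have hQ' := Set.ext_iff.mp hQ
    set s0 : Fin n → ZMod p := Pi.single 0 1 with hs0
    set s1 : Fin n → ZMod p := Pi.single 1 1 with hs1
    have es00 : s0 0 = 1 := by simp [hs0]
    have es01 : s0 1 = 0 := Pi.single_eq_of_ne (Ne.symm h01) 1
    have es10 : s1 0 = 0 := Pi.single_eq_of_ne h01 1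
    have es11 : s1 1 = 1 := by simp [hs1]
    have hW1 : ∀ x : Fin n → ZMod p, x ∈ W1 := by
      intro x
      have hmem : x 0 * (0 : Fin n → ZMod p) 1
          - nuB p (x 0) (x 1) * (0 : Fin n → ZMod p) 0 = 0 := by simp
      exact ((hQ' (x, 0)).mp hmem).1
    have hW2 : ∀ y : Fin n → ZMod p, y ∈ W2 := by
      intro y
      have hmem : (0 : Fin n → ZMod p) 0 * y 1
          - nuB p ((0 : Fin n → ZMod p) 0) ((0 : Fin n → ZMod p) 1) * y 0 = 0 := by
        simp [nuB_zero]
      exact ((hQ' (0, y)).mp hmem).2.1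
    have hvan : ∀ x y : Fin n → ZMod p, (∀ i, Q i x y = 0) →
        x 0 * y 1 - nuB p (x 0) (x 1) * y 0 = 0 := by
      intro x y h
      exact (hQ' (x, y)).mpr ⟨hW1 x, hW2 y, h⟩
    have hQzero : ∀ x y : Fin n → ZMod p,
        (x 0 * y 1 - nuB p (x 0) (x 1) * y 0 = 0) → ∀ i, Q i x y = 0 := by
      intro x y h
      exact ((hQ' (x, y)).mp h).2.2
    have hA : ∀ i, Q i s0 s0 = 0 := by
      apply hQzero
      rw [es00, es01, ev10]; ring
    have hD : ∀ i, Q i s1 s1 = 0 := by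
      apply hQzero
      rw [es10, es11]; ring
    have h12 : ∀ i, Q i (s0 + s1) (s0 + (2:ZMod p) • s1) = 0 := by
      apply hQzero
      rw [Pi.add_apply, Pi.add_apply, Pi.add_apply, Pi.add_apply,
        Pi.smul_apply, Pi.smul_apply, smul_eq_mul, smul_eq_mul,
        es00, es01, es10, es11]
      rw [show (1:ZMod p) + 0 = 1 by ring, show (0:ZMod p) + 1 = 1 by ring, ev11]; ring
    have h21 : ∀ i, Q i (s0 + (2:ZMod p) • s1) (s0 + s1) = 0 := by
      apply hQzero
      rw [Pi.add_apply, Pi.add_apply, Pi.add_apply, Pi.add_apply,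
        Pi.smul_apply, Pi.smul_apply, smul_eq_mul, smul_eq_mul,
        es00, es01, es10, es11]
      rw [show (1:ZMod p) + 2*0 = 1 by ring, show (0:ZMod p) + 2*1 = 2 by ring, ev12]; ring
    have hfin : ∀ i, Q i (s0 + s1) (s0 + s1) = 0 := by
      intro i
      have e12 := h12 i
      have e21 := h21 i
      have eA := hA i
      have eD := hD i
      simp only [map_add, LinearMap.add_apply, map_smul, LinearMap.smul_apply, smul_eq_mul] at e12 e21
      have h3 : (3:ZMod p) * (Q i) (s0 + s1) (s0 + s1) = 0 := by
        simp only [map_add, LinearMap.add_apply]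
        linear_combination e12 + e21 + eA - eD
      rcases mul_eq_zero.mp h3 with h | h
      · exact absurd h h3ne
      · exact h
    have := hvan (s0 + s1) (s0 + s1) hfin
    rw [Pi.add_apply, Pi.add_apply, es00, es01, es10, es11] at this
    rw [show (1:ZMod p) + 0 = 1 by ring, show (0:ZMod p) + 1 = 1 by ring, ev11] at this
    exact h1ne (by linear_combination -this)
  · -- fibers
    intro x
    by_cases hx : x 0 = 0 ∧ nuB p (x 0) (x 1) = 0
    · refine ⟨LinearMap.ker (LinearMap.proj 0), ker_hyperplane p n hp _ ⟨Pi.single 0 1, ?_⟩, ?_⟩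
      · rw [LinearMap.proj_apply, Pi.single_eq_same]
        exact h1ne
      · intro y _
        show x 0 * y 1 - nuB p (x 0) (x 1) * y 0 = 0
        rw [hx.2, hx.1]; ring
    · set f : (Fin n → ZMod p) →ₗ[ZMod p] ZMod p :=
        x 0 • (LinearMap.proj 1 : (Fin n → ZMod p) →ₗ[ZMod p] ZMod p)
          - nuB p (x 0) (x 1) • (LinearMap.proj 0 : (Fin n → ZMod p) →ₗ[ZMod p] ZMod p)
        with hf
      have hfy : ∀ y : Fin n → ZMod p, f y = x 0 * y 1 - nuB p (x 0) (x 1) * y 0 := by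
        intro y
        rw [hf]
        simp [LinearMap.proj_apply, smul_eq_mul]
      refine ⟨LinearMap.ker f, ker_hyperplane p n hp f ?_, ?_⟩
      · rcases not_and_or.mp hx with ha | hb
        · refine ⟨Pi.single 1 1, ?_⟩
          rw [hfy, Pi.single_eq_same, Pi.single_eq_of_ne h01 1]
          intro h
          exact ha (by linear_combination h)
        · refine ⟨Pi.single 0 1, ?_⟩
          rw [hfy, Pi.single_eq_same, Pi.single_eq_of_ne (Ne.symm h01) 1]
          intro h
          exact hb (by linear_combination -h)
      · intro y hy
        show x 0 * y 1 - nuB p (x 0) (x 1) * y 0 = 0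
        rw [← hfy y]
        exact hy
end

section
/- For every prime p and every integer n ≥ 11 (and also for every prime p ≥ 13 and every integer n ≥ 2), there exists a transverse set P ⊆ F_p^n × F_p^n that is not a bilinear set and such that P_{0·} = F_p^n and, for every nonzero x ∈ F_p^n, the vertical fiber P_{x·} is a linear subspace of dimension exactly 1. -/
namespace TNB

variable {K : Type*} [Field K] {n : ℕ}

/-- Lines in `K^n`. -/
def Line (K : Type*) [Field K] (n : ℕ) :=
  {ℓ : Submodule K (Fin n → K) // Module.finrank K ℓ = 1}

/-- The line spanned by a nonzero vector. -/
def lineOf (x : Fin n → K) (hx : x ≠ 0) : Line K n :=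
  ⟨Submodule.span K {x}, finrank_span_singleton hx⟩

lemma mem_lineOf (x : Fin n → K) (hx : x ≠ 0) : x ∈ (lineOf x hx).1 :=
  Submodule.mem_span_singleton_self x

lemma eq_lineOf (ℓ : Line K n) (x : Fin n → K) (hx : x ≠ 0) (hmem : x ∈ ℓ.1) :
    ℓ = lineOf x hx := by
  rcases ℓ with ⟨ℓ, hℓ⟩
  apply Subtype.ext
  dsimp [lineOf]
  haveI : FiniteDimensional K (Fin n → K) := inferInstance
  refine (Submodule.eq_of_le_of_finrank_eq ?_ ?_).symm
  · rwa [Submodule.span_singleton_le_iff_mem]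
  · rw [finrank_span_singleton hx, hℓ]

/-- The set `P_f` attached to a map on lines. -/
def lineP (f : Line K n → Line K n) : Set ((Fin n → K) × (Fin n → K)) :=
  {q | ∀ ℓ : Line K n, q.1 ∈ ℓ.1 → q.1 ≠ 0 → q.2 ∈ (f ℓ).1}

lemma lineP_zero_left (f : Line K n → Line K n) (y : Fin n → K) : ((0 : Fin n → K), y) ∈ lineP f := by
  intro ℓ _ h0
  exact absurd rfl h0

lemma lineP_zero_right (f : Line K n → Line K n) (x : Fin n → K) : (x, (0 : Fin n → K)) ∈ lineP f := by
  intro ℓ _ _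
  exact (f ℓ).1.zero_mem

lemma lineP_fiber (f : Line K n → Line K n) (x : Fin n → K) (hx : x ≠ 0) :
    {y | (x, y) ∈ lineP f} = ((f (lineOf x hx)).1 : Set (Fin n → K)) := by
  ext y
  constructor
  · intro hy
    exact hy (lineOf x hx) (mem_lineOf x hx) hx
  · intro hy ℓ hmem h0
    rwa [eq_lineOf ℓ x hx hmem]

lemma lineP_mem_of (f : Line K n → Line K n) (x y : Fin n → K) (hx : x ≠ 0)
    (hy : y ∈ (f (lineOf x hx)).1) : (x, y) ∈ lineP f := by
  intro ℓ hmem h0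
  rwa [eq_lineOf ℓ x hx hmem]

lemma lineP_transverse (f : Line K n → Line K n) (hf : Function.Injective f) :
    IsTransverse (lineP f) := by
  constructor
  · ext q
    constructor
    · rintro ⟨y₁, y₂, h₁, h₂, hq⟩
      intro ℓ hmem h0
      rw [hq]
      exact (f ℓ).1.add_mem (h₁ ℓ hmem h0) (h₂ ℓ hmem h0)
    · intro hq
      exact ⟨q.2, 0, hq, lineP_zero_right f q.1, (add_zero q.2).symm⟩
  · ext q
    constructor
    · rintro ⟨x₁, x₂, h₁, h₂, hq⟩
      intro ℓ hmem h0
      rw [hq] at hmem h0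
      by_cases hx1 : x₁ = 0
      · subst hx1; rw [zero_add] at hmem h0; exact h₂ ℓ hmem h0
      by_cases hx2 : x₂ = 0
      · subst hx2; rw [add_zero] at hmem h0; exact h₁ ℓ hmem h0
      by_cases hy : q.2 = 0
      · rw [hy]; exact (f ℓ).1.zero_mem
      -- y nonzero, both x nonzero
      have m1 : q.2 ∈ (f (lineOf x₁ hx1)).1 := h₁ _ (mem_lineOf x₁ hx1) hx1
      have m2 : q.2 ∈ (f (lineOf x₂ hx2)).1 := h₂ _ (mem_lineOf x₂ hx2) hx2
      have hfe : f (lineOf x₁ hx1) = f (lineOf x₂ hx2) := by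
        rw [eq_lineOf (f (lineOf x₁ hx1)) q.2 hy m1, eq_lineOf (f (lineOf x₂ hx2)) q.2 hy m2]
      have hle : lineOf x₁ hx1 = lineOf x₂ hx2 := hf hfe
      have hx2mem : x₂ ∈ (lineOf x₁ hx1).1 := by
        rw [hle]; exact mem_lineOf x₂ hx2
      have hsum : x₁ + x₂ ∈ (lineOf x₁ hx1).1 :=
        (lineOf x₁ hx1).1.add_mem (mem_lineOf x₁ hx1) hx2mem
      have : ℓ = lineOf x₁ hx1 := by
        rw [eq_lineOf ℓ (x₁ + x₂) h0 hmem, eq_lineOf (lineOf x₁ hx1) (x₁ + x₂) h0 hsum]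
      rw [this]
      exact m1
    · intro hq
      exact ⟨q.1, 0, hq, lineP_zero_left f q.2, (add_zero q.1).symm⟩

end TNB

open TNB in
section
variable {K : Type*} [Field K] {n : ℕ}

namespace TNB

variable {S : Type*} (vec : S → (Fin n → K)) (π : Equiv.Perm S)
  (hvec : ∀ s, vec s ≠ 0)

/-- special lines -/
def lineS (s : S) : Line K n := lineOf (vec s) (hvec s)

lemma lineS_inj (hinj : ∀ s t : S, Submodule.span K {vec s} = Submodule.span K {vec t} → s = t) :
    Function.Injective (lineS vec hvec) := by
  intro s t h
  exact hinj s t (congrArg (fun ℓ : Line K n => ℓ.1) h)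

open Classical in
/-- the map on lines: permute special lines via `π`, fix the rest. -/
noncomputable def fS : Line K n → Line K n := fun ℓ =>
  if h : ∃ s, ℓ = lineS vec hvec s then lineS vec hvec (π h.choose) else ℓ

lemma fS_lineS (hinj : ∀ s t : S, Submodule.span K {vec s} = Submodule.span K {vec t} → s = t)
    (s : S) : fS vec π hvec (lineS vec hvec s) = lineS vec hvec (π s) := by
  have h : ∃ t, lineS vec hvec s = lineS vec hvec t := ⟨s, rfl⟩
  rw [fS, dif_pos h]
  have : h.choose = s := by
    have := h.choose_spec
    exact (lineS_inj vec hvec hinj this.symm)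
  rw [this]

lemma fS_nonspec (ℓ : Line K n) (h : ¬ ∃ s, ℓ = lineS vec hvec s) : fS vec π hvec ℓ = ℓ := by
  rw [fS, dif_neg h]

lemma fS_inj (hinj : ∀ s t : S, Submodule.span K {vec s} = Submodule.span K {vec t} → s = t) :
    Function.Injective (fS vec π hvec) := by
  intro ℓ₁ ℓ₂ h
  by_cases h₁ : ∃ s, ℓ₁ = lineS vec hvec s
  · obtain ⟨s₁, rfl⟩ := h₁
    rw [fS_lineS vec π hvec hinj] at h
    by_cases h₂ : ∃ s, ℓ₂ = lineS vec hvec s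
    · obtain ⟨s₂, rfl⟩ := h₂
      rw [fS_lineS vec π hvec hinj] at h
      have := π.injective (lineS_inj vec hvec hinj h)
      rw [this]
    · rw [fS_nonspec vec π hvec ℓ₂ h₂] at h
      exact absurd ⟨π s₁, h.symm⟩ h₂
  · rw [fS_nonspec vec π hvec ℓ₁ h₁] at h
    by_cases h₂ : ∃ s, ℓ₂ = lineS vec hvec s
    · obtain ⟨s₂, rfl⟩ := h₂
      rw [fS_lineS vec π hvec hinj] at h
      exact absurd ⟨π s₂, h⟩ h₁
    · rw [fS_nonspec vec π hvec ℓ₂ h₂] at h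
      exact h

/-- conditions coming from special lines -/
lemma cond_spec (hinj : ∀ s t : S, Submodule.span K {vec s} = Submodule.span K {vec t} → s = t)
    (B : (Fin n → K) →ₗ[K] (Fin n → K) →ₗ[K] K)
    (hB : ∀ q ∈ lineP (fS vec π hvec), B q.1 q.2 = 0) (s : S) :
    B (vec s) (vec (π s)) = 0 := by
  apply hB (vec s, vec (π s))
  apply lineP_mem_of _ _ _ (hvec s)
  show vec (π s) ∈ (fS vec π hvec (lineS vec hvec s)).1
  rw [fS_lineS vec π hvec hinj]
  exact mem_lineOf _ _

/-- conditions coming from non-special lines -/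
lemma cond_self (B : (Fin n → K) →ₗ[K] (Fin n → K) →ₗ[K] K)
    (hB : ∀ q ∈ lineP (fS vec π hvec), B q.1 q.2 = 0) (x : Fin n → K) (hx : x ≠ 0)
    (hns : ∀ s : S, Submodule.span K {x} ≠ Submodule.span K {vec s}) :
    B x x = 0 := by
  apply hB (x, x)
  apply lineP_mem_of _ _ _ hx
  have hh : ¬ ∃ s, lineOf x hx = lineS vec hvec s := by
    rintro ⟨s, hs⟩
    exact hns s (congrArg (fun ℓ : Line K n => ℓ.1) hs)
  rw [show fS vec π hvec (lineOf x hx) = lineOf x hx from fS_nonspec vec π hvec _ hh]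
  exact mem_lineOf x hx

end TNB
end


namespace TNB

lemma sum_smul_single {K : Type*} [Field K] {n : ℕ} (z : Fin n → K) :
    ∑ i, z i • (Pi.single i (1:K) : Fin n → K) = z := by
  conv_rhs => rw [← Finset.univ_sum_single z]
  apply Finset.sum_congr rfl
  intro i _
  rw [← Pi.single_smul, smul_eq_mul, mul_one]

lemma mach {R : Type*} [AddCommGroup R] {I : Type*} [Fintype I] [DecidableEq I]
    (N : I → I → R) (s : ℕ) (hs : 1 ≤ s) (hcard : s + 4 ≤ Fintype.card I)
    (H : ∀ A : Finset I, (A.card = s ∨ A.card = s + 1) → ∑ a ∈ A, ∑ b ∈ A, N a b = 0) :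
    ∃ β : R, (∀ a b : I, a ≠ b → N a b + N b a = β) ∧ (∀ a, N a a + s • β = 0) := by
  -- step 1
  have step1 : ∀ (A : Finset I) (l : I), A.card = s → l ∉ A →
      N l l + ∑ x ∈ A, (N x l + N l x) = 0 := by
    intro A l hA hl
    have h2 := H (insert l A) (Or.inr (by rw [Finset.card_insert_of_notMem hl, hA]))
    have h1 := H A (Or.inl hA)
    have expand : ∑ a ∈ insert l A, ∑ b ∈ insert l A, N a b
        = N l l + ∑ x ∈ A, (N x l + N l x) + ∑ a ∈ A, ∑ b ∈ A, N a b := by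
      rw [Finset.sum_insert hl]
      rw [Finset.sum_insert hl]
      have : ∀ a ∈ A, ∑ b ∈ insert l A, N a b = N a l + ∑ b ∈ A, N a b := by
        intro a _
        rw [Finset.sum_insert hl]
      rw [Finset.sum_congr rfl this, Finset.sum_add_distrib, Finset.sum_add_distrib]
      abel
    rw [expand, h1, add_zero] at h2
    exact h2
  -- step 2
  have step2 : ∀ l c c' : I, l ≠ c → l ≠ c' →
      N c l + N l c = N c' l + N l c' := by
    intro l c c' hlc hlc'
    rcases eq_or_ne c c' with rfl | hcc'
    · rfl
    have hT : s - 1 ≤ (Finset.univ \ {l, c, c'} : Finset I).card := by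
      rw [Finset.card_sdiff_of_subset (Finset.subset_univ _), Finset.card_univ]
      have h1 : ({l, c, c'} : Finset I).card ≤ ({c, c'} : Finset I).card + 1 :=
        Finset.card_insert_le _ _
      have h2 : ({c, c'} : Finset I).card ≤ ({c'} : Finset I).card + 1 :=
        Finset.card_insert_le _ _
      have h3 : ({c'} : Finset I).card = 1 := Finset.card_singleton _
      have : ({l, c, c'} : Finset I).card ≤ 3 := by omega
      omega
    obtain ⟨S0, hS0sub, hS0card⟩ := Finset.exists_subset_card_eq hT
    have hmemS0 : ∀ x ∈ S0, x ≠ l ∧ x ≠ c ∧ x ≠ c' := by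
      intro x hx
      have := hS0sub hx
      simp only [Finset.mem_sdiff, Finset.mem_insert, Finset.mem_singleton] at this
      tauto
    have hcS0 : c ∉ S0 := fun h => ((hmemS0 c h).2.1) rfl
    have hc'S0 : c' ∉ S0 := fun h => ((hmemS0 c' h).2.2) rfl
    have hlA : l ∉ insert c S0 := by
      simp only [Finset.mem_insert]
      rintro (rfl | h)
      · exact hlc rfl
      · exact ((hmemS0 l h).1) rfl
    have hlA' : l ∉ insert c' S0 := by
      simp only [Finset.mem_insert]
      rintro (rfl | h)
      · exact hlc' rfl
      · exact ((hmemS0 l h).1) rfl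
    have e1 := step1 (insert c S0) l
      (by rw [Finset.card_insert_of_notMem hcS0, hS0card]; omega) hlA
    have e2 := step1 (insert c' S0) l
      (by rw [Finset.card_insert_of_notMem hc'S0, hS0card]; omega) hlA'
    rw [Finset.sum_insert hcS0] at e1
    rw [Finset.sum_insert hc'S0] at e2
    have := e1.trans e2.symm
    -- N l l + ((N c l + N l c) + Σ) = N l l + ((N c' l + N l c') + Σ)
    have h3 := add_left_cancel this
    exact add_right_cancel h3
  -- C is symmetric
  have Csym : ∀ a b : I, N a b + N b a = N b a + N a b := fun a b => add_comm _ _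
  -- pick two distinct elements
  have hcard2 : 2 ≤ Fintype.card I := by omega
  obtain ⟨a₀, b₀, hab⟩ := Fintype.exists_pair_of_one_lt_card (show 1 < Fintype.card I by omega)
  refine ⟨N a₀ b₀ + N b₀ a₀, ?_, ?_⟩
  · -- all pairs give the same value
    have key : ∀ a b : I, a ≠ b → N a b + N b a = N a₀ b₀ + N b₀ a₀ := by
      intro a b hne
      by_cases hbb0 : b = b₀
      · subst hbb0
        exact step2 b a a₀ (Ne.symm hne) (Ne.symm hab)
      · calc N a b + N b a = N b₀ b + N b b₀ := step2 b a b₀ (Ne.symm hne) hbb0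
          _ = N b b₀ + N b₀ b := add_comm _ _
          _ = N a₀ b₀ + N b₀ a₀ := step2 b₀ b a₀ (Ne.symm hbb0) (Ne.symm hab)
    exact key
  · intro l
    have hT : s ≤ (Finset.univ \ {l} : Finset I).card := by
      rw [Finset.card_sdiff_of_subset (Finset.subset_univ _), Finset.card_univ, Finset.card_singleton]
      omega
    obtain ⟨A, hAsub, hAcard⟩ := Finset.exists_subset_card_eq hT
    have hlA : l ∉ A := by
      intro h
      have := hAsub h
      simp at this
    have e := step1 A l hAcard hlA
    have hconst : ∀ x ∈ A, N x l + N l x = N a₀ b₀ + N b₀ a₀ := by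
      intro x hx
      have hxl : x ≠ l := by
        intro h; subst h; exact hlA hx
      by_cases hlb0 : l = b₀
      · subst hlb0
        exact step2 l x a₀ (Ne.symm hxl) (Ne.symm hab)
      · calc N x l + N l x = N b₀ l + N l b₀ := step2 l x b₀ (Ne.symm hxl) hlb0
          _ = N l b₀ + N b₀ l := add_comm _ _
          _ = N a₀ b₀ + N b₀ a₀ := step2 b₀ l a₀ (Ne.symm hlb0) (Ne.symm hab)
    rw [Finset.sum_congr rfl hconst, Finset.sum_const, hAcard] at e
    exact e

end TNB


namespace TNB
section SchemeA
variable {K : Type*} [Field K] {n : ℕ} [NeZero n]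

/-- indicator vector of a finite set of coordinates -/
def chi (A : Finset (Fin n)) : Fin n → K := fun m => if m ∈ A then 1 else 0

lemma chi_sum (A : Finset (Fin n)) :
    (chi A : Fin n → K) = ∑ a ∈ A, Pi.single a (1:K) := by
  funext m
  rw [Finset.sum_apply]
  simp [chi, Pi.single_apply, Finset.sum_ite_eq]

lemma chi_ne_zero {A : Finset (Fin n)} (hA : A.Nonempty) : (chi A : Fin n → K) ≠ 0 := by
  obtain ⟨a, ha⟩ := hA
  intro h
  have h2 := congrFun h a
  simp only [chi, ha, if_true, Pi.zero_apply] at h2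
  exact one_ne_zero h2

lemma chi_span_inj {A B : Finset (Fin n)} (hA : A.Nonempty) (_hB : B.Nonempty)
    (h : Submodule.span K {(chi A : Fin n → K)} = Submodule.span K {(chi B : Fin n → K)}) :
    A = B := by
  have hmem : (chi A : Fin n → K) ∈ Submodule.span K {(chi B : Fin n → K)} := by
    rw [← h]; exact Submodule.mem_span_singleton_self _
  obtain ⟨c, hc⟩ := Submodule.mem_span_singleton.mp hmem
  have hsub : A ⊆ B := by
    intro a ha
    by_contra hab
    have h2 := congrFun hc a
    simp only [chi, Pi.smul_apply, smul_eq_mul, ha, if_true, hab, if_false, mul_zero] at h2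
    exact one_ne_zero h2.symm
  obtain ⟨a₀, ha₀⟩ := hA
  have hc1 : c = 1 := by
    have h2 := congrFun hc a₀
    simpa only [chi, Pi.smul_apply, smul_eq_mul, ha₀, if_true, hsub ha₀, mul_one] using h2
  apply Finset.Subset.antisymm hsub
  intro b hb
  by_contra hba
  have h2 := congrFun hc b
  simp only [chi, Pi.smul_apply, smul_eq_mul, hb, if_true, hba, if_false, hc1, mul_one] at h2
  exact one_ne_zero h2

/-- the permutation of subsets -/
def gmap : Finset (Fin n) → Finset (Fin n) := fun A =>
  if A.card = 3 ∨ A.card = 4 then A.image (fun x => x + 1)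
  else if A.card = 5 ∨ A.card = 6 then A.image (Equiv.swap 0 1) else A

lemma gmap_card (A : Finset (Fin n)) : (gmap A).card = A.card := by
  unfold gmap
  split_ifs with h1 h2
  · exact Finset.card_image_of_injective A (add_left_injective 1)
  · exact Finset.card_image_of_injective A (Equiv.swap 0 1).injective
  · rfl

lemma gmap_nonempty {A : Finset (Fin n)} (hA : A.Nonempty) : (gmap A).Nonempty := by
  rw [← Finset.card_pos, gmap_card, Finset.card_pos]
  exact hA

lemma gmap_inj : Function.Injective (gmap (n := n)) := by
  intro A B h
  have hcard : A.card = B.card := by rw [← gmap_card A, ← gmap_card B, h]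
  unfold gmap at h
  by_cases h34 : A.card = 3 ∨ A.card = 4
  · rw [if_pos h34, if_pos (by omega : B.card = 3 ∨ B.card = 4)] at h
    exact Finset.image_injective (add_left_injective 1) h
  · rw [if_neg h34, if_neg (by omega : ¬(B.card = 3 ∨ B.card = 4))] at h
    by_cases h56 : A.card = 5 ∨ A.card = 6
    · rw [if_pos h56, if_pos (by omega : B.card = 5 ∨ B.card = 6)] at h
      exact Finset.image_injective (Equiv.swap 0 1).injective h
    · rw [if_neg h56, if_neg (by omega : ¬(B.card = 5 ∨ B.card = 6))] at h
      exact h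

/-- index type for special lines: nonempty subsets of coordinates -/
def SA (n : ℕ) := {A : Finset (Fin n) // A.Nonempty}

instance : Finite (SA n) := Subtype.finite

def gS : SA n → SA n := fun A => ⟨gmap A.1, gmap_nonempty A.2⟩

lemma gS_inj : Function.Injective (gS (n := n)) := by
  intro A B h
  exact Subtype.ext (gmap_inj (congrArg Subtype.val h))

noncomputable def piA (n : ℕ) [NeZero n] : Equiv.Perm (SA n) :=
  Equiv.ofBijective gS (Finite.injective_iff_bijective.mp gS_inj)

lemma piA_apply (A : SA n) : (piA n A).1 = gmap A.1 := rfl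

end SchemeA
end TNB


namespace TNB
section ElimA
variable {K : Type*} [Field K] {n : ℕ} [NeZero n]

open Fin.NatCast Fin.CommRing in
lemma elimA (hn : 11 ≤ n) (B : (Fin n → K) →ₗ[K] (Fin n → K) →ₗ[K] K)
    (hc : ∀ A : Finset (Fin n), A.Nonempty → B (chi A) (chi (gmap A)) = 0) : B = 0 := by
  set M : Fin n → Fin n → K := fun a b => B (Pi.single a 1) (Pi.single b 1) with hM
  have expand : ∀ A C : Finset (Fin n), B (chi A) (chi C) = ∑ a ∈ A, ∑ c ∈ C, M a c := by
    intro A C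
    calc B (chi A) (chi C) = (∑ a ∈ A, B (Pi.single a 1)) (chi C) := by
          rw [chi_sum A, map_sum]
      _ = ∑ a ∈ A, B (Pi.single a 1) (chi C) := LinearMap.sum_apply _ _ _
      _ = ∑ a ∈ A, ∑ c ∈ C, M a c :=
          Finset.sum_congr rfl (fun a _ => by rw [chi_sum C, map_sum])
  -- literals
  have v1 : (1 : Fin n).val = 1 := by rw [Fin.val_one']; exact Nat.mod_eq_of_lt (by omega)
  set i2 : Fin n := 1 + 1 with hi2
  set i3 : Fin n := 1 + 1 + 1 with hi3
  have v2 : i2.val = 2 := by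
    rw [hi2, Fin.val_add, v1]; exact Nat.mod_eq_of_lt (by omega)
  have v3 : i3.val = 3 := by
    rw [hi3, Fin.val_add, v2, v1]; exact Nat.mod_eq_of_lt (by omega)
  have h01 : (0 : Fin n) ≠ 1 := Fin.ne_of_val_ne (by rw [Fin.val_zero, v1]; omega)
  have h02 : (0 : Fin n) ≠ i2 := Fin.ne_of_val_ne (by rw [Fin.val_zero, v2]; omega)
  have h03 : (0 : Fin n) ≠ i3 := Fin.ne_of_val_ne (by rw [Fin.val_zero, v3]; omega)
  have h12 : (1 : Fin n) ≠ i2 := Fin.ne_of_val_ne (by rw [v1, v2]; omega)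
  have h13 : (1 : Fin n) ≠ i3 := Fin.ne_of_val_ne (by rw [v1, v3]; omega)
  have e12 : (1 : Fin n) + 1 = i2 := rfl
  have e23 : i2 + 1 = i3 := rfl
  have e01 : (0 : Fin n) + 1 = 1 := zero_add 1
  -- diagonal
  have diag : ∀ a : Fin n, M a a = 0 := by
    intro a
    have h := hc {a} (Finset.singleton_nonempty a)
    have hg : gmap ({a} : Finset (Fin n)) = {a} := by
      unfold gmap
      rw [if_neg (by simp), if_neg (by simp)]
    rw [hg, expand, Finset.sum_singleton, Finset.sum_singleton] at h
    exact h
  -- antisymmetry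
  have anti : ∀ a b : Fin n, M a b = - M b a := by
    intro a b
    by_cases hab : a = b
    · subst hab; rw [diag a, neg_zero]
    · have h := hc {a, b} ⟨a, by simp⟩
      have hcard : ({a, b} : Finset (Fin n)).card = 2 := Finset.card_pair hab
      have hg : gmap ({a, b} : Finset (Fin n)) = {a, b} := by
        unfold gmap
        rw [if_neg (by omega), if_neg (by omega)]
      rw [hg, expand] at h
      rw [Finset.sum_pair hab] at h
      rw [Finset.sum_pair hab, Finset.sum_pair hab] at h
      rw [diag a, diag b] at h
      -- h : 0 + M a b + (M b a + 0) = 0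
      rw [zero_add, add_zero] at h
      exact eq_neg_of_add_eq_zero_left h
  -- conditions for the two phases
  have mc1 : ∀ A : Finset (Fin n), (A.card = 3 ∨ A.card = 3 + 1) →
      ∑ a ∈ A, ∑ b ∈ A, M a (b + 1) = 0 := by
    intro A hA
    have hne : A.Nonempty := Finset.card_pos.mp (by omega)
    have h := hc A hne
    have hg : gmap A = A.image (fun x => x + 1) := by
      unfold gmap
      rw [if_pos (by omega)]
    rw [hg, expand] at h
    rw [← h]
    apply Finset.sum_congr rfl
    intro a _
    exact (Finset.sum_image (fun x _ y _ hxy => add_left_injective 1 hxy)).symm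
  have mc2 : ∀ A : Finset (Fin n), (A.card = 5 ∨ A.card = 5 + 1) →
      ∑ a ∈ A, ∑ b ∈ A, M a (Equiv.swap (0 : Fin n) 1 b) = 0 := by
    intro A hA
    have hne : A.Nonempty := Finset.card_pos.mp (by omega)
    have h := hc A hne
    have hg : gmap A = A.image (Equiv.swap 0 1) := by
      unfold gmap
      rw [if_neg (by omega), if_pos (by omega)]
    rw [hg, expand] at h
    rw [← h]
    apply Finset.sum_congr rfl
    intro a _
    exact (Finset.sum_image (fun x _ y _ hxy => (Equiv.swap 0 1).injective hxy)).symm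
  obtain ⟨β₁, hp1, hd1⟩ := mach (fun a b => M a (b + 1)) 3 (by omega)
    (by rw [Fintype.card_fin]; omega) mc1
  obtain ⟨β₂, hp2, hd2⟩ := mach (fun a b => M a (Equiv.swap (0:Fin n) 1 b)) 5 (by omega)
    (by rw [Fintype.card_fin]; omega) mc2
  skip
  -- β₂ = 0
  have hb2 : β₂ = 0 := by
    have h := hp2 0 1 h01
    rw [Equiv.swap_apply_right, Equiv.swap_apply_left] at h
    rw [diag, diag, add_zero] at h
    exact h.symm
  -- rows 0 and 1 agree off {0,1}
  have rel01 : ∀ b : Fin n, b ≠ 0 → b ≠ 1 → M 0 b = M 1 b := by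
    intro b hb0 hb1
    have h := hp2 1 b (Ne.symm hb1)
    rw [hb2, Equiv.swap_apply_of_ne_of_ne hb0 hb1, Equiv.swap_apply_right] at h
    rw [anti b 0] at h
    -- h : M 1 b + -(M 0 b) = 0
    rw [← sub_eq_add_neg, sub_eq_zero] at h
    exact h.symm
  -- relations in phase 1
  have d12 : M 1 i2 = -(3 • β₁) := by
    have h := hd1 1
    rw [e12] at h
    exact eq_neg_of_add_eq_zero_left h
  have r02 : M 0 i2 = β₁ := by
    have h := hp1 0 1 h01
    rw [e12, e01, diag, add_zero] at h
    exact h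
  have r03 : M 0 i3 + 3 • β₁ = β₁ := by
    have h := hp1 0 i2 h02
    rw [e23, e01] at h
    rw [anti i2 1, d12, neg_neg] at h
    exact h
  have r13 : M 1 i3 = β₁ := by
    have h := hp1 1 i2 h12
    rw [e23, e12, diag, add_zero] at h
    exact h
  have s2 : M 0 i2 = M 1 i2 := rel01 i2 (Ne.symm h02) (Ne.symm h12)
  have s3 : M 0 i3 = M 1 i3 := rel01 i3 (Ne.symm h03) (Ne.symm h13)
  have hb3 : 3 • β₁ = 0 := by
    rw [s3, r13] at r03
    -- r03 : β₁ + 3 • β₁ = β₁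
    have := r03.trans (add_zero β₁).symm
    exact add_left_cancel this
  have hbeq : β₁ = -(3 • β₁) := by
    calc β₁ = M 0 i2 := r02.symm
      _ = M 1 i2 := s2
      _ = -(3 • β₁) := d12
  have hb1zero : β₁ = 0 := by rw [hbeq, hb3, neg_zero]
  -- clean relations
  have P1 : ∀ a : Fin n, M a (a + 1) = 0 := by
    intro a
    have h := hd1 a
    rw [hb1zero, smul_zero, add_zero] at h
    exact h
  have P1R : ∀ a b : Fin n, a ≠ b → M a (b + 1) + M b (a + 1) = 0 := by
    intro a b hab
    have h := hp1 a b hab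
    rw [hb1zero] at h
    exact h
  -- kill all entries along the rotation orbit (= all pairs)
  have kill : ∀ k : ℕ, ∀ a : Fin n, M a (a + (k : Fin n)) = 0 := by
    have H : ∀ k : ℕ, (∀ m : ℕ, m < k → ∀ a : Fin n, M a (a + (m : Fin n)) = 0) →
        ∀ a : Fin n, M a (a + (k : Fin n)) = 0 := by
      intro k ih a
      rcases k with _ | k
      · simpa using diag a
      rcases k with _ | k
      · simpa using P1 a
      · by_cases hc1 : ((k + 1 : ℕ) : Fin n) = 0
        · have hcast : ((k + 1 + 1 : ℕ) : Fin n) = 1 := by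
            push_cast
            rw [show ((k:Fin n) + 1 + 1) = ((k:Fin n) + 1) + 1 from rfl]
            rw [show ((k:Fin n) + 1) = ((k+1 : ℕ) : Fin n) from by push_cast; ring, hc1, zero_add]
          rw [show ((k + 2 : ℕ) : Fin n) = ((k + 1 + 1 : ℕ) : Fin n) from by push_cast; ring, hcast]
          exact P1 a
        · have hne : a ≠ a + ((k + 1 : ℕ) : Fin n) := by
            intro h
            exact hc1 (left_eq_add.mp h)
          have h := P1R a (a + ((k + 1 : ℕ) : Fin n)) hne
          have e1 : (a + ((k + 1 : ℕ) : Fin n)) + 1 = a + ((k + 1 + 1 : ℕ) : Fin n) := by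
            push_cast; ring
          rw [e1] at h
          have e2 : a + ((k + 1 : ℕ) : Fin n) = (a + 1) + ((k : ℕ) : Fin n) := by
            push_cast; ring
          have h2 : M (a + ((k + 1 : ℕ) : Fin n)) (a + 1) = 0 := by
            rw [anti, e2, ih k (by omega) (a + 1), neg_zero]
          rw [h2, add_zero] at h
          rw [show ((k + 1 + 1 : ℕ) : Fin n) = ((k + 2 : ℕ) : Fin n) from by push_cast; ring] at h
          exact h
    exact fun k => Nat.strongRecOn k H
  have Mzero : ∀ a b : Fin n, M a b = 0 := by
    intro a b
    have h := kill (b - a).val a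
    rw [Fin.cast_val_eq_self] at h
    rw [show a + (b - a) = b from by rw [add_comm]; exact sub_add_cancel b a] at h
    exact h
  -- conclude B = 0
  apply LinearMap.ext
  intro x
  apply LinearMap.ext
  intro y
  rw [LinearMap.zero_apply, LinearMap.zero_apply]
  conv_lhs => rw [← sum_smul_single x]
  rw [map_sum, LinearMap.sum_apply]
  apply Finset.sum_eq_zero
  intro i _
  rw [map_smul, LinearMap.smul_apply]
  conv_lhs => rw [← sum_smul_single y]
  rw [map_sum]
  have hz : ∀ j : Fin n, B (Pi.single i (1:K)) (y j • (Pi.single j (1:K) : Fin n → K)) = 0 := by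
    intro j
    rw [map_smul, smul_eq_mul]
    rw [show B (Pi.single i 1) (Pi.single j (1:K)) = 0 from Mzero i j, mul_zero]
  rw [Finset.sum_congr rfl (fun j _ => hz j), Finset.sum_const_zero, smul_zero]

end ElimA
end TNB


namespace TNB
section SchemeB
variable {K : Type*} [Field K] {n : ℕ}

/-- e_i + t e_j -/
def uvec (i j : Fin n) (t : K) : Fin n → K :=
  Pi.single i (1:K) + t • (Pi.single j (1:K) : Fin n → K)

lemma uvec_apply_fst {i j : Fin n} (hij : i ≠ j) (t : K) : uvec i j t i = 1 := by
  simp [uvec, Pi.single_eq_of_ne hij]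

lemma uvec_apply_snd {i j : Fin n} (hij : i ≠ j) (t : K) : uvec i j t j = t := by
  simp [uvec, Pi.single_eq_of_ne (Ne.symm hij)]

lemma uvec_apply_other {i j m : Fin n} (hmi : m ≠ i) (hmj : m ≠ j) (t : K) :
    uvec i j t m = 0 := by
  simp [uvec, Pi.single_eq_of_ne hmi, Pi.single_eq_of_ne hmj]

lemma uvec_ne_zero {i j : Fin n} (hij : i ≠ j) (t : K) : uvec i j t ≠ 0 := by
  intro h
  have := congrFun h i
  rw [uvec_apply_fst hij, Pi.zero_apply] at this
  exact one_ne_zero this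

/-- index type for scheme B special lines -/
def SB (n : ℕ) := {ij : Fin n × Fin n // ij.1 < ij.2} × Bool

def vecB : SB n → (Fin n → K) := fun s => uvec s.1.1.1 s.1.1.2 (if s.2 then (2:K) else 3)

def piB (n : ℕ) : Equiv.Perm (SB n) :=
  Equiv.prodCongr (Equiv.refl _) ⟨Bool.not, Bool.not, Bool.not_not, Bool.not_not⟩

lemma vecB_ne_zero (s : SB n) : (vecB s : Fin n → K) ≠ 0 :=
  uvec_ne_zero (ne_of_lt s.1.2) _

lemma tval_ne_zero (h2 : (2:K) ≠ 0) (h3 : (3:K) ≠ 0) (b : Bool) :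
    (if b then (2:K) else 3) ≠ 0 := by
  cases b <;> simpa

/-- key span-comparison: if `x = c • uvec k l t` with `t ≠ 0` then `supp x ⊆ ...` etc. -/
lemma span_uvec_eq {i j k l : Fin n} (hij : i < j) (hkl : k < l) {s t : K}
    (hs : s ≠ 0) (ht : t ≠ 0)
    (h : Submodule.span K {uvec i j s} = Submodule.span K {uvec k l t}) :
    i = k ∧ j = l ∧ s = t := by
  have hmem : uvec i j s ∈ Submodule.span K {uvec k l t} := by
    rw [← h]; exact Submodule.mem_span_singleton_self _
  obtain ⟨c, hc⟩ := Submodule.mem_span_singleton.mp hmem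
  have hcne : c ≠ 0 := by
    intro h0
    rw [h0, zero_smul] at hc
    exact uvec_ne_zero (ne_of_lt hij) s hc.symm
  -- k and l are in the support {i,j}
  have hksupp : k = i ∨ k = j := by
    by_contra hk
    push_neg at hk
    have := congrFun hc k
    rw [Pi.smul_apply, uvec_apply_fst (ne_of_lt hkl), smul_eq_mul, mul_one,
      uvec_apply_other hk.1 hk.2] at this
    exact hcne this
  have hlsupp : l = i ∨ l = j := by
    by_contra hl
    push_neg at hl
    have := congrFun hc l
    rw [Pi.smul_apply, uvec_apply_snd (ne_of_lt hkl), smul_eq_mul,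
      uvec_apply_other hl.1 hl.2] at this
    exact mul_ne_zero hcne ht this
  have hik : k = i ∧ l = j := by
    rcases hksupp with hk | hk <;> rcases hlsupp with hl | hl
    · exfalso; rw [hk, hl] at hkl; exact lt_irrefl i hkl
    · exact ⟨hk, hl⟩
    · exfalso; rw [hk, hl] at hkl; exact absurd (hkl.trans hij) (lt_irrefl j)
    · exfalso; rw [hk, hl] at hkl; exact lt_irrefl j hkl
  obtain ⟨hk, hl⟩ := hik
  subst hk
  subst hl
  have e1 := congrFun hc k
  rw [Pi.smul_apply, uvec_apply_fst (ne_of_lt hkl), uvec_apply_fst (ne_of_lt hkl),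
    smul_eq_mul, mul_one] at e1
  -- e1 : c = 1
  have e2 := congrFun hc l
  rw [Pi.smul_apply, uvec_apply_snd (ne_of_lt hkl), uvec_apply_snd (ne_of_lt hkl),
    smul_eq_mul] at e2
  -- e2 : c * t = s
  refine ⟨rfl, rfl, ?_⟩
  rw [← e2, e1, one_mul]

lemma vecB_span_inj (h2 : (2:K) ≠ 0) (h3 : (3:K) ≠ 0) :
    ∀ s t : SB n, Submodule.span K {(vecB s : Fin n → K)} = Submodule.span K {(vecB t : Fin n → K)} → s = t := by
  rintro ⟨⟨⟨i, j⟩, hij⟩, b⟩ ⟨⟨⟨k, l⟩, hkl⟩, b'⟩ h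
  simp only [vecB] at h
  obtain ⟨hik, hjl, hst⟩ := span_uvec_eq hij hkl
    (tval_ne_zero h2 h3 b) (tval_ne_zero h2 h3 b') h
  subst hik
  subst hjl
  have hb : b = b' := by
    by_contra hbb
    cases b <;> cases b' <;> simp_all
    · -- 3 = 2 → 1 = 0
      exact one_ne_zero (by linear_combination hst)
    · exact one_ne_zero (by linear_combination - hst)
  rw [hb]

end SchemeB
end TNB


namespace TNB
section ElimB
variable {K : Type*} [Field K] {n : ℕ}

lemma single_nonspec (h2 : (2:K) ≠ 0) (h3 : (3:K) ≠ 0) (a : Fin n) (s : SB n) :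
    Submodule.span K {(Pi.single a (1:K) : Fin n → K)} ≠ Submodule.span K {(vecB s : Fin n → K)} := by
  obtain ⟨⟨⟨k, l⟩, hkl⟩, b⟩ := s
  intro h
  have hmem : (Pi.single a (1:K) : Fin n → K) ∈ Submodule.span K {(vecB (⟨⟨(k,l), hkl⟩, b⟩ : SB n) : Fin n → K)} := by
    rw [← h]; exact Submodule.mem_span_singleton_self _
  obtain ⟨c, hc⟩ := Submodule.mem_span_singleton.mp hmem
  simp only [vecB] at hc
  have hl := congrFun hc l
  rw [Pi.smul_apply, uvec_apply_snd (ne_of_lt hkl), smul_eq_mul] at hl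
  have hk := congrFun hc k
  rw [Pi.smul_apply, uvec_apply_fst (ne_of_lt hkl), smul_eq_mul, mul_one] at hk
  -- single a 1 vanishes at one of k, l
  by_cases hak : a = k
  · subst hak
    -- hl : c * t = single a 1 l = 0 (l ≠ a)
    rw [Pi.single_eq_of_ne (Ne.symm (ne_of_lt hkl))] at hl
    have hc0 : c = 0 := by
      rcases mul_eq_zero.mp hl with h | h
      · exact h
      · exact absurd h (tval_ne_zero h2 h3 b)
    rw [hc0] at hk
    rw [Pi.single_eq_same] at hk
    exact one_ne_zero hk.symm
  · rw [Pi.single_eq_of_ne (Ne.symm hak)] at hk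
    by_cases hal : a = l
    · subst hal
      rw [Pi.single_eq_same] at hl
      rw [hk, zero_mul] at hl
      exact one_ne_zero hl.symm
    · have ha := congrFun hc a
      rw [Pi.smul_apply, uvec_apply_other hak hal, smul_eq_mul, mul_zero,
        Pi.single_eq_same] at ha
      exact one_ne_zero ha.symm

lemma uvec_one_nonspec (h2 : (2:K) ≠ 0) (h3 : (3:K) ≠ 0) {i j : Fin n} (hij : i < j) (s : SB n) :
    Submodule.span K {(uvec i j (1:K) : Fin n → K)} ≠ Submodule.span K {(vecB s : Fin n → K)} := by
  obtain ⟨⟨⟨k, l⟩, hkl⟩, b⟩ := s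
  intro h
  simp only [vecB] at h
  obtain ⟨_, _, hst⟩ := span_uvec_eq hij hkl one_ne_zero (tval_ne_zero h2 h3 b) h
  cases b
  · simp only [Bool.false_eq_true, if_false] at hst
    -- hst : 1 = 3
    apply h2
    linear_combination -hst
  · simp only [if_true] at hst
    -- hst : 1 = 2
    exact one_ne_zero (by linear_combination -hst)

lemma bilinear_zero_of_basis {B : (Fin n → K) →ₗ[K] (Fin n → K) →ₗ[K] K}
    (h : ∀ a b : Fin n, B (Pi.single a 1) (Pi.single b 1) = 0) : B = 0 := by
  apply LinearMap.ext
  intro x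
  apply LinearMap.ext
  intro y
  rw [LinearMap.zero_apply, LinearMap.zero_apply]
  conv_lhs => rw [← sum_smul_single x]
  rw [map_sum, LinearMap.sum_apply]
  apply Finset.sum_eq_zero
  intro i _
  rw [map_smul, LinearMap.smul_apply]
  conv_lhs => rw [← sum_smul_single y]
  rw [map_sum]
  have hz : ∀ j : Fin n, B (Pi.single i (1:K)) (y j • (Pi.single j (1:K) : Fin n → K)) = 0 := by
    intro j
    rw [map_smul, smul_eq_mul, h i j, mul_zero]
  rw [Finset.sum_congr rfl (fun j _ => hz j), Finset.sum_const_zero, smul_zero]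

lemma expand_uvec (B : (Fin n → K) →ₗ[K] (Fin n → K) →ₗ[K] K) (i j : Fin n) (s t : K) :
    B (uvec i j s) (uvec i j t) =
      B (Pi.single i 1) (Pi.single j 1) * t + B (Pi.single j 1) (Pi.single i 1) * s +
      (B (Pi.single i 1) (Pi.single i 1) + B (Pi.single j 1) (Pi.single j 1) * (s * t)) := by
  simp only [uvec, map_add, map_smul, LinearMap.add_apply, LinearMap.smul_apply, smul_eq_mul]
  ring

lemma elimB (h2 : (2:K) ≠ 0) (h3 : (3:K) ≠ 0)
    (B : (Fin n → K) →ₗ[K] (Fin n → K) →ₗ[K] K)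
    (hcond : ∀ s : SB n, B (vecB s) (vecB (piB n s)) = 0)
    (hself : ∀ x : Fin n → K, x ≠ 0 →
      (∀ s : SB n, Submodule.span K {x} ≠ Submodule.span K {(vecB s : Fin n → K)}) →
      B x x = 0) : B = 0 := by
  set M : Fin n → Fin n → K := fun a b => B (Pi.single a 1) (Pi.single b 1) with hM
  have diag : ∀ a : Fin n, M a a = 0 := by
    intro a
    apply hself (Pi.single a 1) ?_ (single_nonspec h2 h3 a)
    intro h
    have h0 := congrFun h a
    rw [Pi.single_eq_same, Pi.zero_apply] at h0
    exact one_ne_zero h0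
  have offdiag : ∀ i j : Fin n, i < j → M i j = 0 ∧ M j i = 0 := by
    intro i j hij
    -- condition from the fixed line through uvec i j 1
    have c1 : B (uvec i j (1:K)) (uvec i j (1:K)) = 0 :=
      hself _ (uvec_ne_zero (ne_of_lt hij) 1) (uvec_one_nonspec h2 h3 hij)
    rw [expand_uvec] at c1
    rw [show (B (Pi.single i 1)) (Pi.single j 1) = M i j from rfl,
      show (B (Pi.single j 1)) (Pi.single i 1) = M j i from rfl,
      show (B (Pi.single i 1)) (Pi.single i 1) = M i i from rfl,
      show (B (Pi.single j 1)) (Pi.single j 1) = M j j from rfl,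
      diag, diag, mul_one, mul_one, zero_mul, add_zero, add_zero] at c1
    -- condition from the swapped pair
    have c2 : B (uvec i j (2:K)) (uvec i j (3:K)) = 0 := by
      have h := hcond ⟨⟨(i,j), hij⟩, true⟩
      exact h
    rw [show B (uvec i j (2:K)) (uvec i j (3:K)) =
      B (Pi.single i 1) (Pi.single j 1) * 3 + B (Pi.single j 1) (Pi.single i 1) * 2 +
      (B (Pi.single i 1) (Pi.single i 1) + B (Pi.single j 1) (Pi.single j 1) * (2 * 3))
      from expand_uvec B i j 2 3] at c2
    rw [show B (Pi.single i 1) (Pi.single j 1) = M i j from rfl,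
      show B (Pi.single j 1) (Pi.single i 1) = M j i from rfl,
      show B (Pi.single i 1) (Pi.single i 1) = M i i from rfl,
      show B (Pi.single j 1) (Pi.single j 1) = M j j from rfl,
      diag, diag, zero_mul, add_zero, add_zero] at c2
    -- c2 : M i j * 3 + M j i * 2 = 0, c1 : M i j + M j i = 0
    constructor
    · linear_combination c2 - 2 * c1
    · linear_combination 3 * c1 - c2
  apply bilinear_zero_of_basis
  intro a b
  rcases lt_trichotomy a b with h | h | h
  · exact (offdiag a b h).1
  · subst h; exact diag a
  · exact (offdiag b a h).2

end ElimB
end TNB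


namespace TNB

variable {K : Type*} [Field K] {n : ℕ}

lemma main_construction {S : Type*} (vec : S → (Fin n → K)) (π : Equiv.Perm S)
    (hvec : ∀ s, vec s ≠ 0)
    (hinj : ∀ s t : S, Submodule.span K {vec s} = Submodule.span K {vec t} → s = t)
    (hn2 : 2 ≤ n)
    (helim : ∀ B : (Fin n → K) →ₗ[K] (Fin n → K) →ₗ[K] K,
      (∀ q ∈ lineP (fS vec π hvec), B q.1 q.2 = 0) → B = 0) :
    ∃ P : Set ((Fin n → K) × (Fin n → K)),
      IsTransverse P ∧
      (∀ (W₁ W₂ : Submodule K (Fin n → K)) (r : ℕ)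
        (Q : Fin r → ((Fin n → K) →ₗ[K] (Fin n → K) →ₗ[K] K)),
        P ≠ {q | q.1 ∈ W₁ ∧ q.2 ∈ W₂ ∧ ∀ i, Q i q.1 q.2 = 0}) ∧
      {y : Fin n → K | ((0 : Fin n → K), y) ∈ P} = Set.univ ∧
      ∀ x : Fin n → K, x ≠ 0 →
        ∃ L : Submodule K (Fin n → K),
          Module.finrank K L = 1 ∧ {y | (x, y) ∈ P} = (L : Set (Fin n → K)) := by
  set f := fS vec π hvec with hf
  refine ⟨lineP f, lineP_transverse f (fS_inj vec π hvec hinj), ?_, ?_, ?_⟩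
  · -- not bilinear
    intro W₁ W₂ r Q hPeq
    have hQ0 : ∀ i, Q i = 0 := by
      intro i
      apply helim
      intro q hq
      rw [hPeq] at hq
      exact hq.2.2 i
    have huniv : ∀ q : (Fin n → K) × (Fin n → K), q ∈ lineP f := by
      intro q
      rw [hPeq]
      refine ⟨?_, ?_, ?_⟩
      · have h1 : (q.1, (0 : Fin n → K)) ∈ lineP f := lineP_zero_right f q.1
        rw [hPeq] at h1
        exact h1.1
      · have h1 : ((0 : Fin n → K), q.2) ∈ lineP f := lineP_zero_left f q.2
        rw [hPeq] at h1
        exact h1.2.1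
      · intro i
        rw [hQ0 i]
        rfl
    -- but the fiber over a nonzero point is a line, not everything
    haveI : NeZero n := ⟨by omega⟩
    have hx₀ : (Pi.single (0 : Fin n) (1:K) : Fin n → K) ≠ 0 := by
      intro h
      have h0 := congrFun h 0
      rw [Pi.single_eq_same, Pi.zero_apply] at h0
      exact one_ne_zero h0
    set ℓ := f (lineOf _ hx₀) with hℓ
    have hne_top : ℓ.1 ≠ ⊤ := by
      intro htop
      have h1 : Module.finrank K ℓ.1 = 1 := ℓ.2
      rw [htop, finrank_top] at h1
      have h2 : Module.finrank K (Fin n → K) = n := by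
        simp [Module.finrank_pi]
      omega
    obtain ⟨y₀, hy₀⟩ : ∃ y₀, y₀ ∉ ℓ.1 := by
      by_contra hcon
      push_neg at hcon
      exact hne_top (Submodule.eq_top_iff'.mpr hcon)
    apply hy₀
    have hfib := lineP_fiber f _ hx₀
    have : y₀ ∈ {y | (Pi.single (0 : Fin n) (1:K), y) ∈ lineP f} := huniv _
    rwa [hfib] at this
  · ext y
    simp only [Set.mem_setOf_eq, Set.mem_univ, iff_true]
    exact lineP_zero_left f y
  · intro x hx
    exact ⟨(f (lineOf x hx)).1, (f (lineOf x hx)).2, lineP_fiber f x hx⟩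

end TNB

/-- For every prime `p` and every `n ≥ 11` (and also for every prime `p ≥ 13` and `n ≥ 2`),
there is a transverse non-bilinear set `P ⊆ F_p^n × F_p^n` whose fiber over `0` is
everything and whose fiber over each nonzero `x` is a line. -/
theorem exists_transverse_not_bilinear_line_fibers (p n : ℕ) (hp : p.Prime)
    (hn : 11 ≤ n ∨ (13 ≤ p ∧ 2 ≤ n)) :
    ∃ P : Set ((Fin n → ZMod p) × (Fin n → ZMod p)),
      IsTransverse P ∧ ¬ IsBilinearSet p n P ∧
      {y : Fin n → ZMod p | ((0 : Fin n → ZMod p), y) ∈ P} = Set.univ ∧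
      ∀ x : Fin n → ZMod p, x ≠ 0 →
        ∃ L : Submodule (ZMod p) (Fin n → ZMod p),
          Module.finrank (ZMod p) L = 1 ∧ {y | (x, y) ∈ P} = (L : Set (Fin n → ZMod p)) := by

  haveI : Fact p.Prime := ⟨hp⟩
  have hn2 : 2 ≤ n := by rcases hn with h | h; omega; exact h.2
  by_cases hcase : 11 ≤ n
  · -- scheme A
    haveI : NeZero n := ⟨by omega⟩
    set vecA : TNB.SA n → (Fin n → ZMod p) := fun A => TNB.chi A.1 with hvecA_def
    have hvec : ∀ s : TNB.SA n, vecA s ≠ 0 := fun s => TNB.chi_ne_zero s.2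
    have hinj : ∀ s t : TNB.SA n,
        Submodule.span (ZMod p) {vecA s} = Submodule.span (ZMod p) {vecA t} → s = t :=
      fun s t h => Subtype.ext (TNB.chi_span_inj s.2 t.2 h)
    have helim : ∀ B : (Fin n → ZMod p) →ₗ[ZMod p] (Fin n → ZMod p) →ₗ[ZMod p] ZMod p,
        (∀ q ∈ TNB.lineP (TNB.fS vecA (TNB.piA n) hvec), B q.1 q.2 = 0) → B = 0 := by
      intro B hB
      apply TNB.elimA hcase B
      intro A hA
      exact TNB.cond_spec vecA (TNB.piA n) hvec hinj B hB ⟨A, hA⟩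
    obtain ⟨P, hT, hNB, hfib0, hfib⟩ :=
      TNB.main_construction vecA (TNB.piA n) hvec hinj hn2 helim
    refine ⟨P, hT, ?_, hfib0, hfib⟩
    rintro ⟨W₁, W₂, r, Q, hPeq⟩
    exact hNB W₁ W₂ r Q hPeq
  · -- scheme B
    have hp13 : 13 ≤ p := by
      rcases hn with h | h
      · omega
      · exact h.1
    have h2 : (2 : ZMod p) ≠ 0 := by
      intro h
      have : ((2 : ℕ) : ZMod p) = 0 := by exact_mod_cast h
      rw [ZMod.natCast_eq_zero_iff] at this
      have := Nat.le_of_dvd (by norm_num) this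
      omega
    have h3 : (3 : ZMod p) ≠ 0 := by
      intro h
      have : ((3 : ℕ) : ZMod p) = 0 := by exact_mod_cast h
      rw [ZMod.natCast_eq_zero_iff] at this
      have := Nat.le_of_dvd (by norm_num) this
      omega
    have helim : ∀ B : (Fin n → ZMod p) →ₗ[ZMod p] (Fin n → ZMod p) →ₗ[ZMod p] ZMod p,
        (∀ q ∈ TNB.lineP (TNB.fS TNB.vecB (TNB.piB n) TNB.vecB_ne_zero), B q.1 q.2 = 0) →
          B = 0 := by
      intro B hB
      apply TNB.elimB h2 h3 B
      · intro s
        exact TNB.cond_spec TNB.vecB (TNB.piB n) TNB.vecB_ne_zero (TNB.vecB_span_inj h2 h3)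
          B hB s
      · intro x hx hns
        exact TNB.cond_self TNB.vecB (TNB.piB n) TNB.vecB_ne_zero B hB x hx hns
    obtain ⟨P, hT, hNB, hfib0, hfib⟩ :=
      TNB.main_construction TNB.vecB (TNB.piB n) TNB.vecB_ne_zero (TNB.vecB_span_inj h2 h3)
        hn2 helim
    refine ⟨P, hT, ?_, hfib0, hfib⟩
    rintro ⟨W₁, W₂, r, Q, hPeq⟩
    exact hNB W₁ W₂ r Q hPeq
end

section
/- Let V_1 and V_2 be finite-dimensional vector spaces over F_p and let P ⊆ V_1 × V_2. Then P is transverse if and only if the fiber map x ↦ P_{x·} satisfies all of the following: (i) for every x ∈ V_1, the fiber P_{x·} is either empty or a linear subspace of V_2, and P_{x·} ⊆ P_{0·}; (ii) for every nonzero x ∈ V_1 and every nonzero scalar λ ∈ F_p, P_{λx·} = P_{x·}; (iii) for all x, y ∈ V_1 and every z in the linear span of {x, y}, P_{z·} ⊇ P_{x·} ∩ P_{y·}. -/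
/-- The vertical sum `A +V A`. -/

lemma exists_submodule_of_addClosed (p : ℕ) [Fact p.Prime] {V : Type*} [AddCommGroup V]
    [Module (ZMod p) V] {S : Set V} (hne : S.Nonempty)
    (hS : ∀ a ∈ S, ∀ b ∈ S, a + b ∈ S) :
    ∃ M : Submodule (ZMod p) V, S = (M : Set V) := by
  have hsmul : ∀ n : ℕ, ∀ y ∈ S, (n + 1) • y ∈ S := by
    intro n
    induction n with
    | zero => intro y hy; simpa using hy
    | succ k ih =>
        intro y hy
        have := hS _ (ih y hy) y hy
        have heq : (k + 1 + 1) • y = (k + 1) • y + y := succ_nsmul y (k + 1)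
        rw [heq]; exact this
  have hnsmul0 : ∀ y : V, (p : ℕ) • y = 0 := by
    intro y
    rw [← Nat.cast_smul_eq_nsmul (ZMod p), ZMod.natCast_self, zero_smul]
  have hzero : (0 : V) ∈ S := by
    obtain ⟨y, hy⟩ := hne
    have hp : p - 1 + 1 = p := Nat.succ_pred_eq_of_pos (Fact.out : p.Prime).pos
    have := hsmul (p - 1) y hy
    rw [hp, hnsmul0] at this
    exact this
  refine ⟨{ carrier := S,
            add_mem' := fun ha hb => hS _ ha _ hb,
            zero_mem' := hzero,
            smul_mem' := ?_ }, rfl⟩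
  intro c y hy
  have hc : c • y = c.val • y := by
    rw [← Nat.cast_smul_eq_nsmul (ZMod p), ZMod.natCast_val, ZMod.cast_id]
  rcases Nat.eq_zero_or_pos c.val with h0 | hpos
  · rw [hc, h0, zero_smul]; exact hzero
  · rw [hc, ← Nat.succ_pred_eq_of_pos hpos]
    exact hsmul _ y hy

/-- Characterisation of transverse sets `P ⊆ V₁ × V₂` by rigidity properties of the
fiber map `x ↦ P_{x·}`. -/
theorem isTransverse_iff_fiber_rigidity (p : ℕ) [Fact p.Prime]
    (V1 V2 : Type*) [AddCommGroup V1] [Module (ZMod p) V1]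
    [AddCommGroup V2] [Module (ZMod p) V2]
    [FiniteDimensional (ZMod p) V1] [FiniteDimensional (ZMod p) V2]
    (P : Set (V1 × V2)) :
    IsTransverse P ↔
      ((∀ x : V1,
          ({y | (x, y) ∈ P} = (∅ : Set V2) ∨
            ∃ S : Submodule (ZMod p) V2, {y | (x, y) ∈ P} = (S : Set V2)) ∧
          {y | (x, y) ∈ P} ⊆ {y | ((0 : V1), y) ∈ P}) ∧
       (∀ x : V1, x ≠ 0 → ∀ l : ZMod p, l ≠ 0 →
          {y | (l • x, y) ∈ P} = {y | (x, y) ∈ P}) ∧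
       (∀ x y z : V1, z ∈ Submodule.span (ZMod p) {x, y} →
          {v | (x, v) ∈ P} ∩ {v | (y, v) ∈ P} ⊆ {v | (z, v) ∈ P})) := by
  constructor
  · rintro ⟨hv, hh⟩
    -- vertical fibers closed under addition
    have hvadd : ∀ x : V1, ∀ y₁ ∈ {y | (x, y) ∈ P}, ∀ y₂ ∈ {y | (x, y) ∈ P},
        y₁ + y₂ ∈ {y | (x, y) ∈ P} := by
      intro x y₁ h1 y₂ h2
      have : (x, y₁ + y₂) ∈ vSum P := ⟨y₁, y₂, h1, h2, rfl⟩
      rwa [hv] at this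
    -- horizontal fibers closed under addition
    have hhadd : ∀ v : V2, ∀ x₁ ∈ {x | (x, v) ∈ P}, ∀ x₂ ∈ {x | (x, v) ∈ P},
        x₁ + x₂ ∈ {x | (x, v) ∈ P} := by
      intro v x₁ h1 x₂ h2
      have : (x₁ + x₂, v) ∈ hSum P := ⟨x₁, x₂, h1, h2, rfl⟩
      rwa [hh] at this
    -- nonempty horizontal fibers are submodules
    have hhsub : ∀ v : V2, ∀ x : V1, (x, v) ∈ P →
        ∃ M : Submodule (ZMod p) V1, {x | (x, v) ∈ P} = (M : Set V1) := by
      intro v x hx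
      exact exists_submodule_of_addClosed p ⟨x, hx⟩ (hhadd v)
    refine ⟨fun x => ⟨?_, ?_⟩, ?_, ?_⟩
    · rcases Set.eq_empty_or_nonempty {y | (x, y) ∈ P} with he | hne
      · exact Or.inl he
      · exact Or.inr (exists_submodule_of_addClosed p hne (hvadd x))
    · intro y hy
      obtain ⟨M, hM⟩ := hhsub y x hy
      have h0 : (0 : V1) ∈ {x | (x, y) ∈ P} := by rw [hM]; exact M.zero_mem
      exact h0
    · intro x _ l hl
      ext y
      constructor
      · intro hy
        obtain ⟨M, hM⟩ := hhsub y (l • x) hy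
        have hlx : l • x ∈ M := by
          have h' : l • x ∈ ((M : Submodule (ZMod p) _) : Set _) := by rw [← hM]; exact hy
          exact h'
        have : x ∈ M := by
          have := M.smul_mem l⁻¹ hlx
          rwa [← smul_assoc, smul_eq_mul, inv_mul_cancel₀ hl, one_smul] at this
        show x ∈ {x | (x, y) ∈ P}
        rw [hM]; exact this
      · intro hy
        obtain ⟨M, hM⟩ := hhsub y x hy
        have hx : x ∈ M := by
          have h' : x ∈ ((M : Submodule (ZMod p) _) : Set _) := by rw [← hM]; exact hy
          exact h'
        show l • x ∈ {x | (x, y) ∈ P}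
        rw [hM]; exact M.smul_mem l hx
    · intro x y z hz v hv
      obtain ⟨hvx, hvy⟩ := hv
      obtain ⟨M, hM⟩ := hhsub v x hvx
      have hx : x ∈ M := by
        have h' : x ∈ ((M : Submodule (ZMod p) _) : Set _) := by rw [← hM]; exact hvx
        exact h'
      have hy : y ∈ M := by
        have h' : y ∈ ((M : Submodule (ZMod p) _) : Set _) := by rw [← hM]; exact hvy
        exact h'
      have hspan : Submodule.span (ZMod p) {x, y} ≤ M := by
        rw [Submodule.span_le]
        rintro w (rfl | rfl)
        · exact hx
        · exact hy
      show z ∈ {x | (x, v) ∈ P}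
      rw [hM]; exact hspan hz
  · rintro ⟨h1, h2, h3⟩
    have hzero : ∀ x : V1, ∀ y : V2, (x, y) ∈ P → (x, (0 : V2)) ∈ P := by
      intro x y hxy
      rcases (h1 x).1 with he | ⟨S, hS⟩
      · exact absurd (Set.eq_empty_iff_forall_notMem.mp he y) (fun h => h hxy)
      · have : (0 : V2) ∈ {y | (x, y) ∈ P} := by rw [hS]; exact S.zero_mem
        exact this
    constructor
    · ext ⟨x, y⟩
      constructor
      · rintro ⟨y₁, y₂, hy1, hy2, rfl⟩
        rcases (h1 x).1 with he | ⟨S, hS⟩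
        · exact absurd (Set.eq_empty_iff_forall_notMem.mp he y₁) (fun h => h hy1)
        · have hy1' : y₁ ∈ S := by
            have h' : y₁ ∈ ((S : Submodule (ZMod p) _) : Set _) := by rw [← hS]; exact hy1
            exact h'
          have hy2' : y₂ ∈ S := by
            have h' : y₂ ∈ ((S : Submodule (ZMod p) _) : Set _) := by rw [← hS]; exact hy2
            exact h'
          have : y₁ + y₂ ∈ {y | (x, y) ∈ P} := by rw [hS]; exact S.add_mem hy1' hy2'
          exact this
      · intro hxy
        exact ⟨y, 0, hxy, hzero x y hxy, (add_zero y).symm⟩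
    · ext ⟨x, v⟩
      constructor
      · rintro ⟨x₁, x₂, hx1, hx2, rfl⟩
        have hz : x₁ + x₂ ∈ Submodule.span (ZMod p) {x₁, x₂} :=
          Submodule.add_mem _ (Submodule.subset_span (by simp))
            (Submodule.subset_span (by simp))
        exact h3 x₁ x₂ (x₁ + x₂) hz ⟨hx1, hx2⟩
      · intro hxv
        have h0 : ((0 : V1), v) ∈ P := (h1 x).2 hxv
        exact ⟨x, 0, hxv, h0, (add_zero x).symm⟩
end

section
/- Let V_1 and V_2 be finite-dimensional vector spaces over F_p with dim V_1 ≥ 2, and let ξ : ℙ(V_1) → ℙ(V_2) be a map between their projectivizations with the property that for all nonzero x, y, z ∈ V_1 with z in the linear span of {x, y}, the point ξ([z]) lies on the projective line through ξ([x]) and ξ([y]) (i.e. any representative of ξ([z]) lies in the linear span of representatives of ξ([x]) and ξ([y])). Then ξ is either constant or injective. -/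
open Projectivization

section Aux

variable {K : Type*} [Field K] {V : Type*} [AddCommGroup V] [Module K V]

private lemma aux_mk_eq_mk {v w : V} (hv : v ≠ 0) (hw : w ≠ 0) {c : K} (h : c • v = w) :
    Projectivization.mk K v hv = Projectivization.mk K w hw :=
  ((mk_eq_mk_iff' K w v hw hv).mpr ⟨c, h⟩).symm

end Aux

/-- A map between projectivizations that sends collinear points to collinear points is
either constant or injective (Lemma on collineations). -/
theorem collineation_constant_or_injective (p : ℕ) [Fact p.Prime]
    (V1 V2 : Type*) [AddCommGroup V1] [Module (ZMod p) V1]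
    [AddCommGroup V2] [Module (ZMod p) V2]
    [FiniteDimensional (ZMod p) V1] [FiniteDimensional (ZMod p) V2]
    (hdim : 2 ≤ Module.finrank (ZMod p) V1)
    (ξ : Projectivization (ZMod p) V1 → Projectivization (ZMod p) V2)
    (hcol : ∀ (x y z : V1) (hx : x ≠ 0) (hy : y ≠ 0) (hz : z ≠ 0),
      z ∈ Submodule.span (ZMod p) ({x, y} : Set V1) →
      (ξ (Projectivization.mk (ZMod p) z hz)).rep ∈
        Submodule.span (ZMod p)
          ({(ξ (Projectivization.mk (ZMod p) x hx)).rep,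
            (ξ (Projectivization.mk (ZMod p) y hy)).rep} : Set V2)) :
    (∀ a b, ξ a = ξ b) ∨ Function.Injective ξ := by
  set K := ZMod p with hK
  by_cases hinj : Function.Injective ξ
  · exact Or.inr hinj
  left
  rw [Function.not_injective_iff] at hinj
  obtain ⟨a, b, hab, hne⟩ := hinj
  -- the collapse lemma: if the two endpoints of a line have the same image, the whole line
  -- is mapped to that image.
  have collapse : ∀ (x y z : V1) (hx : x ≠ 0) (hy : y ≠ 0) (hz : z ≠ 0),
      ξ (Projectivization.mk K x hx) = ξ (Projectivization.mk K y hy) →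
      z ∈ Submodule.span K ({x, y} : Set V1) →
      ξ (Projectivization.mk K z hz) = ξ (Projectivization.mk K x hx) := by
    intro x y z hx hy hz hxy hzs
    have h := hcol x y z hx hy hz hzs
    rw [hxy, Set.pair_eq_singleton, Submodule.mem_span_singleton] at h
    obtain ⟨c, hc⟩ := h
    have h1 := aux_mk_eq_mk (rep_nonzero (ξ (Projectivization.mk K y hy)))
      (rep_nonzero (ξ (Projectivization.mk K z hz))) hc
    rw [mk_rep, mk_rep] at h1
    rw [← h1, hxy]
  obtain ⟨u, hu, rfl⟩ : ∃ x hx, Projectivization.mk K x hx = a :=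
    ⟨a.rep, rep_nonzero a, mk_rep a⟩
  obtain ⟨v, hv, rfl⟩ : ∃ x hx, Projectivization.mk K x hx = b :=
    ⟨b.rep, rep_nonzero b, mk_rep b⟩
  suffices h : ∀ c, ξ c = ξ (Projectivization.mk K u hu) by
    intro a' b'; rw [h a', h b']
  intro c
  obtain ⟨t, ht, rfl⟩ : ∃ x hx, Projectivization.mk K x hx = c :=
    ⟨c.rep, rep_nonzero c, mk_rep c⟩
  have hind : ∀ α : K, u ≠ α • v := by
    intro α h
    exact hne ((mk_eq_mk_iff' K u v hu hv).mpr ⟨α, h.symm⟩)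
  by_cases hts : t ∈ Submodule.span K ({u, v} : Set V1)
  · exact collapse u v t hu hv ht hab hts
  -- now `t` is off the line through `u` and `v`; suppose for contradiction that
  -- `ξ [t] ≠ ξ [u]`.
  by_contra hxw
  have hnz : ∀ α β : K, t + (α • u + β • v) ≠ 0 := by
    intro α β h
    apply hts
    have ht' : t = (-α) • u + (-β) • v := by
      rw [neg_smul, neg_smul, ← neg_add]
      exact eq_neg_of_add_eq_zero_left h
    rw [ht']
    exact Submodule.add_mem _
      (Submodule.smul_mem _ _ (Submodule.subset_span (by simp)))
      (Submodule.smul_mem _ _ (Submodule.subset_span (by simp)))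
  have htu : t + u ≠ 0 := by have := hnz 1 0; simpa using this
  have htv : ∀ μ : K, t + μ • v ≠ 0 := by intro μ; have := hnz 0 μ; simpa using this
  -- injectivity of ξ on the line through [t] and [v]
  have hMv : ∀ μ₁ μ₂ : K, ξ (Projectivization.mk K (t + μ₁ • v) (htv μ₁)) =
      ξ (Projectivization.mk K (t + μ₂ • v) (htv μ₂)) → μ₁ = μ₂ := by
    intro μ₁ μ₂ heq
    by_contra hne12
    have hd : μ₂ - μ₁ ≠ 0 := sub_ne_zero.mpr (Ne.symm hne12)
    have ht_mem : t ∈ Submodule.span K ({t + μ₁ • v, t + μ₂ • v} : Set V1) := by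
      refine Submodule.mem_span_pair.mpr
        ⟨1 + μ₁ * (μ₂ - μ₁)⁻¹, -(μ₁ * (μ₂ - μ₁)⁻¹), ?_⟩
      match_scalars <;> simp only [K] at hd ⊢ <;> field_simp <;> ring
    have hv_mem : v ∈ Submodule.span K ({t + μ₁ • v, t + μ₂ • v} : Set V1) := by
      refine Submodule.mem_span_pair.mpr ⟨-(μ₂ - μ₁)⁻¹, (μ₂ - μ₁)⁻¹, ?_⟩
      match_scalars <;> simp only [K] at hd ⊢ <;> field_simp <;> ring
    have h1 := collapse _ _ t (htv μ₁) (htv μ₂) ht heq ht_mem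
    have h2 := collapse _ _ v (htv μ₁) (htv μ₂) hv heq hv_mem
    exact hxw ((h1.trans h2.symm).trans hab.symm)
  have hMv' : ∀ μ : K, ξ (Projectivization.mk K (t + μ • v) (htv μ)) ≠
      ξ (Projectivization.mk K u hu) := by
    intro μ h
    have hzv : ξ (Projectivization.mk K (t + μ • v) (htv μ)) =
        ξ (Projectivization.mk K v hv) := h.trans hab
    have htm : t ∈ Submodule.span K ({t + μ • v, v} : Set V1) :=
      Submodule.mem_span_pair.mpr ⟨1, -μ, by module⟩
    have := collapse _ _ t (htv μ) hv ht hzv htm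
    exact hxw (this.trans h)
  have hyW : ξ (Projectivization.mk K (t + u) htu) ≠ ξ (Projectivization.mk K u hu) := by
    intro h
    have htm : t ∈ Submodule.span K ({t + u, u} : Set V1) :=
      Submodule.mem_span_pair.mpr ⟨1, -1, by module⟩
    have := collapse _ _ t htu hu ht h htm
    exact hxw (this.trans h)
  -- the injective "parametrization" of the image line by the line through [t],[v]
  set G : Option K → Projectivization K V2 := fun o =>
    match o with
    | none => ξ (Projectivization.mk K u hu)
    | some μ => ξ (Projectivization.mk K (t + μ • v) (htv μ)) with hGdef
  have hG : Function.Injective G := by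
    rintro (_ | μ₁) (_ | μ₂) h
    · rfl
    · exact absurd h.symm (hMv' μ₂)
    · exact absurd h (hMv' μ₁)
    · rw [hMv μ₁ μ₂ h]
  -- the parametrization of the image line
  have hx0 : ∀ α : K, (ξ (Projectivization.mk K t ht)).rep ≠
      α • (ξ (Projectivization.mk K u hu)).rep := by
    intro α h
    apply hxw
    rw [← mk_rep (ξ (Projectivization.mk K t ht)),
      ← mk_rep (ξ (Projectivization.mk K u hu))]
    exact (mk_eq_mk_iff' K _ _ _ _).mpr ⟨α, h.symm⟩
  have hxν : ∀ ν : K, (ξ (Projectivization.mk K t ht)).rep +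
      ν • (ξ (Projectivization.mk K u hu)).rep ≠ 0 := by
    intro ν h
    exact hx0 (-ν) (by rw [neg_smul]; exact eq_neg_of_add_eq_zero_left h)
  set H : Option K → Projectivization K V2 := fun o =>
    match o with
    | none => ξ (Projectivization.mk K u hu)
    | some ν => Projectivization.mk K ((ξ (Projectivization.mk K t ht)).rep +
        ν • (ξ (Projectivization.mk K u hu)).rep) (hxν ν) with hHdef
  -- every point on the image line is hit by H
  have hcov : ∀ P : Projectivization K V2,
      P.rep ∈ Submodule.span K ({(ξ (Projectivization.mk K t ht)).rep,
        (ξ (Projectivization.mk K u hu)).rep} : Set V2) → ∃ o, H o = P := by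
    intro P hP
    obtain ⟨α, β, hαβ⟩ := Submodule.mem_span_pair.mp hP
    by_cases hα : α = 0
    · refine ⟨none, ?_⟩
      rw [hα, zero_smul, zero_add] at hαβ
      have h1 := aux_mk_eq_mk (rep_nonzero (ξ (Projectivization.mk K u hu)))
        (rep_nonzero P) hαβ
      rw [mk_rep, mk_rep] at h1
      exact h1
    · refine ⟨some (α⁻¹ * β), ?_⟩
      have hs : α • ((ξ (Projectivization.mk K t ht)).rep +
          (α⁻¹ * β) • (ξ (Projectivization.mk K u hu)).rep) = P.rep := by
        rw [← hαβ]
        match_scalars <;> simp only [K] at hα ⊢ <;> field_simp <;> ring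
      have h1 := aux_mk_eq_mk (hxν (α⁻¹ * β)) (rep_nonzero P) hs
      rw [mk_rep] at h1
      exact h1
  -- G lands in the image line, so we can transport it to `Option K` via H
  have hFex : ∀ o, ∃ o', H o' = G o := by
    intro o
    apply hcov
    match o with
    | none =>
      exact Submodule.subset_span (Or.inr rfl)
    | some μ =>
      have hmem : t + μ • v ∈ Submodule.span K ({t, v} : Set V1) :=
        Submodule.mem_span_pair.mpr ⟨1, μ, by module⟩
      have h := hcol t v (t + μ • v) ht hv (htv μ) hmem
      rw [hab.symm] at h
      exact h
  choose F hF using hFex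
  have hFinj : Function.Injective F := by
    intro o₁ o₂ h
    apply hG
    rw [← hF, ← hF, h]
  have hFsurj : Function.Surjective F := Finite.injective_iff_surjective.mp hFinj
  -- the point y = ξ [t+u] is on the image line
  have hy := hcol t u (t + u) ht hu htu (Submodule.mem_span_pair.mpr ⟨1, 1, by module⟩)
  obtain ⟨oy, hoy⟩ := hcov _ hy
  obtain ⟨o, ho⟩ := hFsurj oy
  have hGy : G o = ξ (Projectivization.mk K (t + u) htu) := by
    rw [← hoy, ← ho, hF]
  match o with
  | none => exact hyW hGy.symm
  | some μ' =>
    have hm0 : u - μ' • v ≠ 0 := fun h => hind μ' (sub_eq_zero.mp h)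
    have hm_mem : u - μ' • v ∈ Submodule.span K ({t + u, t + μ' • v} : Set V1) :=
      Submodule.mem_span_pair.mpr ⟨1, -1, by module⟩
    have h1 := collapse (t + u) (t + μ' • v) (u - μ' • v) htu (htv μ') hm0 hGy.symm hm_mem
    have hm_mem2 : u - μ' • v ∈ Submodule.span K ({u, v} : Set V1) :=
      Submodule.mem_span_pair.mpr ⟨1, -μ', by module⟩
    have h2 := collapse u v (u - μ' • v) hu hv hm0 hab hm_mem2
    exact hyW (h1.symm.trans h2)
end

section
/- Let V_1 and V_2 be finite-dimensional vector spaces over F_p and let σ : ℙ(V_1) → ℙ(V_2) be an injective map. Then the set P_σ = ({0} × V_2) ∪ ⋃_{[x] ∈ ℙ(V_1)} span(x) × span(σ̃(x)) is transverse, where σ̃(x) denotes any vector representative of σ([x]) and span denotes the linear span. -/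
open Projectivization

lemma eq_mk_of_mem_span {K V : Type*} [Field K] [AddCommGroup V] [Module K V]
    (a : Projectivization K V) {v : V} (hv : v ≠ 0)
    (h : v ∈ Submodule.span K {a.rep}) :
    a = Projectivization.mk K v hv := by
  rw [Submodule.mem_span_singleton] at h
  obtain ⟨c, rfl⟩ := h
  have hc : c ≠ 0 := by rintro rfl; simp at hv
  conv_lhs => rw [← Projectivization.mk_rep a]
  rw [Projectivization.mk_eq_mk_iff]
  refine ⟨(Units.mk0 c hc)⁻¹, ?_⟩
  rw [Units.smul_def, Units.val_inv_eq_inv_val, Units.val_mk0, smul_smul,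
    inv_mul_cancel₀ hc, one_smul]

/-- For an injective map `σ : ℙ(V₁) → ℙ(V₂)`, the set
`P_σ = ({0} × V₂) ∪ ⋃_{[x] ∈ ℙ(V₁)} span(x) × span(σ([x]))` is transverse. -/
theorem transverse_of_injective_projective_map (p : ℕ) [Fact p.Prime]
    (V1 V2 : Type*) [AddCommGroup V1] [Module (ZMod p) V1]
    [AddCommGroup V2] [Module (ZMod p) V2]
    [FiniteDimensional (ZMod p) V1] [FiniteDimensional (ZMod p) V2]
    (σ : Projectivization (ZMod p) V1 → Projectivization (ZMod p) V2)
    (hσ : Function.Injective σ) :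
    IsTransverse
      (({(0 : V1)} : Set V1) ×ˢ (Set.univ : Set V2) ∪
        ⋃ x : Projectivization (ZMod p) V1,
          ((Submodule.span (ZMod p) {x.rep} : Submodule (ZMod p) V1) : Set V1) ×ˢ
            ((Submodule.span (ZMod p) {(σ x).rep} : Submodule (ZMod p) V2) : Set V2)) := by
  set A : Set (V1 × V2) :=
      (({(0 : V1)} : Set V1) ×ˢ (Set.univ : Set V2) ∪
        ⋃ x : Projectivization (ZMod p) V1,
          ((Submodule.span (ZMod p) {x.rep} : Submodule (ZMod p) V1) : Set V1) ×ˢ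
            ((Submodule.span (ZMod p) {(σ x).rep} : Submodule (ZMod p) V2) : Set V2)) with hA
  -- (0, y) ∈ A for all y
  have hzero_left : ∀ y : V2, ((0 : V1), y) ∈ A := by
    intro y
    exact Or.inl ⟨rfl, Set.mem_univ _⟩
  -- (x, 0) ∈ A for all x
  have hzero_right : ∀ x : V1, (x, (0 : V2)) ∈ A := by
    intro x
    by_cases hx : x = 0
    · subst hx; exact hzero_left 0
    · refine Or.inr (Set.mem_iUnion.mpr ⟨Projectivization.mk (ZMod p) x hx, ?_, ?_⟩)
      · have : x ∈ Submodule.span (ZMod p) {x} := Submodule.mem_span_singleton_self x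
        have hspan : Submodule.span (ZMod p) {(Projectivization.mk (ZMod p) x hx).rep} =
            Submodule.span (ZMod p) {x} := by
          rw [← Projectivization.submodule_eq, Projectivization.submodule_mk]
        rw [hspan]
        exact this
      · exact Submodule.zero_mem _
  -- membership in a union piece with nonzero first coordinate forces the index
  have key : ∀ (a : Projectivization (ZMod p) V1) (x : V1) (y : V2) (hx : x ≠ 0),
      (x, y) ∈ ((Submodule.span (ZMod p) {a.rep} : Submodule (ZMod p) V1) : Set V1) ×ˢ
        ((Submodule.span (ZMod p) {(σ a).rep} : Submodule (ZMod p) V2) : Set V2) →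
      a = Projectivization.mk (ZMod p) x hx ∧
        y ∈ Submodule.span (ZMod p) {(σ a).rep} := by
    intro a x y hx h
    exact ⟨eq_mk_of_mem_span a hx h.1, h.2⟩
  constructor
  · -- vertical
    ext ⟨x, y⟩
    constructor
    · rintro ⟨y₁, y₂, h1, h2, rfl⟩
      by_cases hx : x = 0
      · subst hx; exact hzero_left _
      · rcases h1 with h1 | h1
        · exact absurd h1.1 hx
        rcases h2 with h2 | h2
        · exact absurd h2.1 hx
        obtain ⟨a, ha⟩ := Set.mem_iUnion.mp h1
        obtain ⟨b, hb⟩ := Set.mem_iUnion.mp h2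
        obtain ⟨hae, hay⟩ := key a x y₁ hx ha
        obtain ⟨hbe, hby⟩ := key b x y₂ hx hb
        have hab : a = b := hae.trans hbe.symm
        subst hab
        refine Or.inr (Set.mem_iUnion.mpr ⟨a, ha.1, ?_⟩)
        exact Submodule.add_mem _ hay hby
    · intro h
      exact ⟨y, 0, h, hzero_right x, (add_zero y).symm⟩
  · -- horizontal
    ext ⟨x, y⟩
    constructor
    · rintro ⟨x₁, x₂, h1, h2, rfl⟩
      by_cases hy : y = 0
      · subst hy; exact hzero_right _
      rcases h1 with h1 | h1
      · -- x₁ = 0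
        obtain ⟨hx1, -⟩ := h1
        simp only [Set.mem_singleton_iff] at hx1
        subst hx1
        rw [zero_add]
        exact h2
      rcases h2 with h2 | h2
      · obtain ⟨hx2, -⟩ := h2
        simp only [Set.mem_singleton_iff] at hx2
        subst hx2
        rw [add_zero]
        exact Or.inr h1
      obtain ⟨a, ha1, ha2⟩ := Set.mem_iUnion.mp h1
      obtain ⟨b, hb1, hb2⟩ := Set.mem_iUnion.mp h2
      have hab : σ a = σ b := by
        have h1' := eq_mk_of_mem_span (σ a) hy ha2
        have h2' := eq_mk_of_mem_span (σ b) hy hb2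
        exact h1'.trans h2'.symm
      have hab' : a = b := hσ hab
      subst hab'
      by_cases hx : x₁ + x₂ = 0
      · rw [hx]; exact hzero_left _
      · refine Or.inr (Set.mem_iUnion.mpr ⟨a, ?_, ha2⟩)
        exact Submodule.add_mem _ ha1 hb1
    · intro h
      exact ⟨0, x, hzero_left y, h, (zero_add x).symm⟩
end

section
/- Let σ be the permutation of the nonzero vectors of F_2^3 given by: σ fixes (1,0,0), (0,1,0), (0,0,1), (1,1,0), and σ(1,0,1) = (0,1,1), σ(0,1,1) = (1,1,1), σ(1,1,1) = (1,0,1). Let P = ({0} × F_2^3) ∪ ⋃_{x ≠ 0} {0, x} × {0, σ(x)}. Then P is transverse but P is not a bilinear set; in particular, the point ((1,0,0),(0,1,0)) lies in the common zero set of all bilinear forms vanishing on P but does not lie in P. -/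
/-- The permutation `σ` of the nonzero vectors of `F_2^3`: it fixes `(1,0,0)`, `(0,1,0)`,
`(0,0,1)`, `(1,1,0)`, and cyclically permutes `(1,0,1) ↦ (0,1,1) ↦ (1,1,1) ↦ (1,0,1)`. -/
def sigmaPerm (x : Fin 3 → ZMod 2) : Fin 3 → ZMod 2 :=
  if x = ![1, 0, 1] then ![0, 1, 1]
  else if x = ![0, 1, 1] then ![1, 1, 1]
  else if x = ![1, 1, 1] then ![1, 0, 1]
  else x

/-- The set `P = ({0} × F_2^3) ∪ ⋃_{x ≠ 0} {0, x} × {0, σ(x)}`. -/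
def Psigma : Set ((Fin 3 → ZMod 2) × (Fin 3 → ZMod 2)) :=
  ({(0 : Fin 3 → ZMod 2)} : Set (Fin 3 → ZMod 2)) ×ˢ (Set.univ : Set (Fin 3 → ZMod 2)) ∪
    ⋃ x ∈ {v : Fin 3 → ZMod 2 | v ≠ 0},
      ({0, x} : Set (Fin 3 → ZMod 2)) ×ˢ ({0, sigmaPerm x} : Set (Fin 3 → ZMod 2))

lemma sigmaPerm_inj : Function.Injective sigmaPerm := by decide

lemma mem_Psigma (x y : Fin 3 → ZMod 2) :
    (x, y) ∈ Psigma ↔ x = 0 ∨ y = 0 ∨ y = sigmaPerm x := by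
  simp only [Psigma, Set.mem_union, Set.mem_prod, Set.mem_singleton_iff, Set.mem_univ,
    and_true, Set.mem_iUnion, Set.mem_setOf_eq, Set.mem_insert_iff, exists_prop]
  constructor
  · rintro (h | ⟨z, hz, (rfl | rfl), (rfl | rfl)⟩)
    · exact Or.inl h
    · exact Or.inl rfl
    · exact Or.inl rfl
    · exact Or.inr (Or.inl rfl)
    · exact Or.inr (Or.inr rfl)
  · intro h
    by_cases hx : x = 0
    · exact Or.inl hx
    · right
      refine ⟨x, hx, Or.inr rfl, ?_⟩
      rcases h with h | h | h
      · exact absurd h hx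
      · exact Or.inl h
      · exact Or.inr h

lemma addSelf (v : Fin 3 → ZMod 2) : v + v = 0 := by
  funext i; exact CharTwo.add_self_eq_zero _

lemma key (b11 b12 b13 b21 b22 b23 b31 b32 b33 : ZMod 2) :
    b11 = 0 → b22 = 0 → b33 = 0 →
    b12 + b13 + b32 + b33 = 0 →
    b21 + b22 + b23 + b31 + b32 + b33 = 0 →
    b11 + b13 + b21 + b23 + b31 + b33 = 0 →
    b12 = 0 := by
  revert b11 b12 b13 b21 b22 b23 b31 b32 b33
  decide

/-- `Psigma` is transverse but not bilinear; in particular `((1,0,0),(0,1,0))` lies in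
the common zero set of all bilinear forms vanishing on `Psigma` but not in `Psigma`. -/
theorem Psigma_transverse_not_bilinear :
    IsTransverse Psigma ∧ ¬ IsBilinearSet 2 3 Psigma ∧
    (∀ b : (Fin 3 → ZMod 2) →ₗ[ZMod 2] (Fin 3 → ZMod 2) →ₗ[ZMod 2] ZMod 2,
      (∀ q ∈ Psigma, b q.1 q.2 = 0) → b ![1, 0, 0] ![0, 1, 0] = 0) ∧
    (![1, 0, 0], ![0, 1, 0]) ∉ Psigma := by
  have hvz : ∀ x : Fin 3 → ZMod 2, (x, (0 : Fin 3 → ZMod 2)) ∈ Psigma :=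
    fun x => (mem_Psigma x 0).2 (Or.inr (Or.inl rfl))
  have h0y : ∀ y : Fin 3 → ZMod 2, ((0 : Fin 3 → ZMod 2), y) ∈ Psigma :=
    fun y => (mem_Psigma 0 y).2 (Or.inl rfl)
  -- transversality
  have htrans : IsTransverse Psigma := by
    constructor
    · ext ⟨x, y⟩
      simp only [vSum, Set.mem_setOf_eq]
      constructor
      · rintro ⟨y₁, y₂, h1, h2, rfl⟩
        rw [mem_Psigma] at h1 h2 ⊢
        rcases h1 with h1 | h1 | h1
        · exact Or.inl h1
        all_goals rcases h2 with h2 | h2 | h2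
        · exact Or.inl h2
        · subst h1; subst h2; exact Or.inr (Or.inl (by rw [add_zero]))
        · subst h1; subst h2; exact Or.inr (Or.inr (by rw [zero_add]))
        · exact Or.inl h2
        · subst h1; subst h2; exact Or.inr (Or.inr (by rw [add_zero]))
        · subst h1; subst h2; exact Or.inr (Or.inl (addSelf _))
      · intro h
        exact ⟨y, 0, h, hvz x, (add_zero y).symm⟩
    · ext ⟨x, y⟩
      simp only [hSum, Set.mem_setOf_eq]
      constructor
      · rintro ⟨x₁, x₂, h1, h2, rfl⟩
        rw [mem_Psigma] at h1 h2 ⊢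
        rcases h1 with h1 | h1 | h1
        · rcases h2 with h2 | h2 | h2
          · subst h1; subst h2; exact Or.inl (addSelf _)
          · exact Or.inr (Or.inl h2)
          · subst h1; subst h2
            refine Or.inr (Or.inr ?_)
            rw [zero_add]
        · exact Or.inr (Or.inl h1)
        · rcases h2 with h2 | h2 | h2
          · subst h1; subst h2
            refine Or.inr (Or.inr ?_)
            rw [add_zero]
          · exact Or.inr (Or.inl h2)
          · have : x₁ = x₂ := sigmaPerm_inj (h1 ▸ h2.symm ▸ rfl)
            subst this
            rw [addSelf]
            exact Or.inl rfl
      · intro h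
        exact ⟨x, 0, h, h0y y, (add_zero x).symm⟩
  -- the key vanishing statement
  have hkey : ∀ b : (Fin 3 → ZMod 2) →ₗ[ZMod 2] (Fin 3 → ZMod 2) →ₗ[ZMod 2] ZMod 2,
      (∀ q ∈ Psigma, b q.1 q.2 = 0) → b ![1, 0, 0] ![0, 1, 0] = 0 := by
    intro b hb
    have mem : ∀ x : Fin 3 → ZMod 2, x ≠ 0 → b x (sigmaPerm x) = 0 := by
      intro x hx
      exact hb (x, sigmaPerm x) ((mem_Psigma x (sigmaPerm x)).2 (Or.inr (Or.inr rfl)))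
    have h1 : b ![1,0,0] ![1,0,0] = 0 := by
      have := mem ![1,0,0] (by decide)
      rwa [show sigmaPerm ![1,0,0] = ![1,0,0] by decide] at this
    have h2 : b ![0,1,0] ![0,1,0] = 0 := by
      have := mem ![0,1,0] (by decide)
      rwa [show sigmaPerm ![0,1,0] = ![0,1,0] by decide] at this
    have h3 : b ![0,0,1] ![0,0,1] = 0 := by
      have := mem ![0,0,1] (by decide)
      rwa [show sigmaPerm ![0,0,1] = ![0,0,1] by decide] at this
    have h5 : b ![1,0,1] ![0,1,1] = 0 := by
      have := mem ![1,0,1] (by decide)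
      rwa [show sigmaPerm ![1,0,1] = ![0,1,1] by decide] at this
    have h6 : b ![0,1,1] ![1,1,1] = 0 := by
      have := mem ![0,1,1] (by decide)
      rwa [show sigmaPerm ![0,1,1] = ![1,1,1] by decide] at this
    have h7 : b ![1,1,1] ![1,0,1] = 0 := by
      have := mem ![1,1,1] (by decide)
      rwa [show sigmaPerm ![1,1,1] = ![1,0,1] by decide] at this
    rw [show (![1,0,1] : Fin 3 → ZMod 2) = ![1,0,0] + ![0,0,1] by decide,
        show (![0,1,1] : Fin 3 → ZMod 2) = ![0,1,0] + ![0,0,1] by decide] at h5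
    rw [show (![0,1,1] : Fin 3 → ZMod 2) = ![0,1,0] + ![0,0,1] by decide,
        show (![1,1,1] : Fin 3 → ZMod 2) = ![1,0,0] + (![0,1,0] + ![0,0,1]) by decide] at h6
    rw [show (![1,1,1] : Fin 3 → ZMod 2) = ![1,0,0] + (![0,1,0] + ![0,0,1]) by decide,
        show (![1,0,1] : Fin 3 → ZMod 2) = ![1,0,0] + ![0,0,1] by decide] at h7
    simp only [map_add, LinearMap.add_apply] at h5 h6 h7
    refine key (b ![1,0,0] ![1,0,0]) (b ![1,0,0] ![0,1,0]) (b ![1,0,0] ![0,0,1])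
      (b ![0,1,0] ![1,0,0]) (b ![0,1,0] ![0,1,0]) (b ![0,1,0] ![0,0,1])
      (b ![0,0,1] ![1,0,0]) (b ![0,0,1] ![0,1,0]) (b ![0,0,1] ![0,0,1])
      h1 h2 h3 ?_ ?_ ?_
    · linear_combination h5
    · linear_combination h6
    · linear_combination h7
  -- not in Psigma
  have hnotmem : (![1, 0, 0], ![0, 1, 0]) ∉ Psigma := by
    rw [mem_Psigma]
    push_neg
    refine ⟨by decide, by decide, by decide⟩
  -- not bilinear
  have hnb : ¬ IsBilinearSet 2 3 Psigma := by
    rintro ⟨W₁, W₂, r, Q, hP⟩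
    apply hnotmem
    rw [hP]
    refine ⟨?_, ?_, ?_⟩
    · have := hvz ![1,0,0]
      rw [hP] at this
      exact this.1
    · have := h0y ![0,1,0]
      rw [hP] at this
      exact this.2.1
    · intro i
      apply hkey (Q i)
      intro q hq
      rw [hP] at hq
      exact hq.2.2 i
  exact ⟨htrans, hnb, hkey, hnotmem⟩
end

section
/- Let V_1 and V_2 be finite-dimensional vector spaces over F_p and let P ⊆ V_1 × V_2 be a transverse set with P_{0·} = V_2. Then the set W = {x ∈ V_1 : P_{x·} = V_2} is a linear subspace of V_1, and moreover for any x, y ∈ V_1 with x − y ∈ W, the fibers P_{x·} and P_{y·} are equal. -/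
/-- For a transverse set `P` with full fiber over `0`, the set
`W = {x : P_{x·} = V₂}` is a linear subspace, and fibers only depend on classes
modulo `W`. -/
theorem full_fiber_set_is_subspace (p : ℕ) [Fact p.Prime]
    (V1 V2 : Type*) [AddCommGroup V1] [Module (ZMod p) V1]
    [AddCommGroup V2] [Module (ZMod p) V2]
    [FiniteDimensional (ZMod p) V1] [FiniteDimensional (ZMod p) V2]
    (P : Set (V1 × V2)) (hP : IsTransverse P)
    (h0 : {y : V2 | ((0 : V1), y) ∈ P} = Set.univ) :
    (∃ W : Submodule (ZMod p) V1,
      {x : V1 | {y : V2 | (x, y) ∈ P} = Set.univ} = (W : Set V1)) ∧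
    (∀ x y : V1, {v : V2 | (x - y, v) ∈ P} = Set.univ →
      {v : V2 | (x, v) ∈ P} = {v : V2 | (y, v) ∈ P}) := by
  classical
  -- horizontal addition of points with same second coordinate
  have hH : ∀ x₁ x₂ (v : V2), (x₁, v) ∈ P → (x₂, v) ∈ P → (x₁ + x₂, v) ∈ P := by
    intro x₁ x₂ v h1 h2
    have : ((x₁ + x₂, v) : V1 × V2) ∈ hSum P := ⟨x₁, x₂, h1, h2, rfl⟩
    rwa [hP.2] at this
  set S : Set V1 := {x : V1 | {y : V2 | (x, y) ∈ P} = Set.univ} with hS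
  have hmem : ∀ x, x ∈ S ↔ ∀ v : V2, (x, v) ∈ P := by
    intro x
    constructor
    · intro h v
      have : v ∈ {y : V2 | (x, y) ∈ P} := by rw [h]; trivial
      exact this
    · intro h
      ext v; simp [h v]
  have hzero : (0 : V1) ∈ S := h0
  have hadd : ∀ x y, x ∈ S → y ∈ S → x + y ∈ S := by
    intro x y hx hy
    rw [hmem] at hx hy ⊢
    intro v
    exact hH x y v (hx v) (hy v)
  have hnsmul : ∀ (n : ℕ) (x : V1), x ∈ S → n • x ∈ S := by
    intro n x hx
    induction n with
    | zero => simpa using hzero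
    | succ k ih =>
      rw [succ_nsmul]
      exact hadd _ _ ih hx
  refine ⟨⟨⟨⟨⟨S, ?_⟩, ?_⟩, ?_⟩, rfl⟩, ?_⟩
  · exact fun {a b} ha hb => hadd a b ha hb
  · exact hzero
  · intro c x hx
    have hc : ((c.val : ℕ) : ZMod p) = c := ZMod.natCast_rightInverse c
    have hcx : c • x = (c.val : ℕ) • x := by
      conv_lhs => rw [← hc]
      rw [Nat.cast_smul_eq_nsmul]
    rw [hcx]
    exact hnsmul _ _ hx
  · intro x y h
    have hxy : x - y ∈ S := h
    have hp0 : (p : ZMod p) = 0 := ZMod.natCast_self p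
    have hneg : y - x ∈ S := by
      have h1 : (p - 1) • (x - y) ∈ S := hnsmul _ _ hxy
      have hp1 : 1 ≤ p := (Fact.out : p.Prime).one_lt.le
      have : (p - 1) • (x - y) = y - x := by
        have hps : p • (x - y) = (0 : V1) := by
          rw [← Nat.cast_smul_eq_nsmul (ZMod p), hp0, zero_smul]
        have : (p - 1) • (x - y) + (x - y) = 0 := by
          rw [← succ_nsmul, Nat.sub_add_cancel hp1, hps]
        linear_combination (norm := abel) this
      rwa [this] at h1
    ext v
    rw [hmem] at hxy hneg
    constructor
    · intro hv
      have := hH (y - x) x v (hneg v) hv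
      simpa using this
    · intro hv
      have := hH (x - y) y v (hxy v) hv
      simpa using this
end
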